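/- arXiv:1206.1548 — 13 statements merged into one kernel-verified Lean document; each statement's English description precedes it below -/
import Mathlib

section
/- Let N = p^k · m^2 be an odd perfect number, where p is a prime with p ≡ k ≡ 1 (mod 4) and gcd(p, m) = 1. Then σ(p^k) ≤ (2/3) · m^2. -/
set_option maxHeartbeats 1000000

open Finset ArithmeticFunction

private lemma opn_sum_pow_mod (p r n : ℕ) (h : p % r = 1) :
    (∑ i ∈ Finset.range n, p ^ i) % r = n % r := by
  induction n with
  | zero => simp
  | succ n ih =>
    have hp : p ^ n % r = 1 % r := by
      rw [Nat.pow_mod, h, Nat.one_pow]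
    rw [Finset.sum_range_succ, Nat.add_mod, ih, hp, ← Nat.add_mod]

private lemma opn_geom_closed (p : ℕ) (hp : 1 ≤ p) (u : ℕ) :
    (p - 1) * (∑ i ∈ Finset.range u, p ^ i) + 1 = p ^ u := by
  induction u with
  | zero => simp
  | succ u ih =>
    rw [Finset.sum_range_succ]
    have h1 : (p - 1) * ((∑ i ∈ Finset.range u, p ^ i) + p ^ u) + 1
        = ((p - 1) * (∑ i ∈ Finset.range u, p ^ i) + 1) + (p - 1) * p ^ u := by ring
    rw [h1, ih, pow_succ]
    have hpp : p - 1 + 1 = p := by omega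
    calc p ^ u + (p - 1) * p ^ u = (p - 1 + 1) * p ^ u := by ring
      _ = p ^ u * p := by rw [hpp]; ring

private lemma opn_sum_two_mul (p u : ℕ) :
    ∑ i ∈ Finset.range (2 * u), p ^ i
      = (∑ i ∈ Finset.range u, p ^ i) * (p ^ u + 1) := by
  have h2u : 2 * u = u + u := by ring
  rw [h2u, Finset.sum_range_add]
  have : ∀ i, p ^ (u + i) = p ^ u * p ^ i := fun i => pow_add p u i
  simp_rw [this, ← Finset.mul_sum]
  ring

private lemma opn_sum_succ (q n : ℕ) :
    ∑ i ∈ Finset.range (n + 1), q ^ i = q * (∑ i ∈ Finset.range n, q ^ i) + 1 := by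
  rw [Finset.sum_range_succ' (fun i => q ^ i) n]
  simp_rw [pow_succ, mul_comm (q ^ _) q, ← Finset.mul_sum]
  simp

private lemma opn_sigma_ge_self {n : ℕ} (hn : 0 < n) : n ≤ ArithmeticFunction.sigma 1 n := by
  rw [ArithmeticFunction.sigma_one_apply]
  exact Finset.single_le_sum (f := fun i => i) (fun i _ => Nat.zero_le i)
    (Nat.mem_divisors_self n hn.ne')

private lemma opn_sigma_ge_succ {n : ℕ} (hn : 1 < n) : n + 1 ≤ ArithmeticFunction.sigma 1 n := by
  rw [ArithmeticFunction.sigma_one_apply]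
  have hsub : ({1, n} : Finset ℕ) ⊆ n.divisors := by
    intro x hx
    simp only [Finset.mem_insert, Finset.mem_singleton] at hx
    rcases hx with rfl | rfl
    · exact Nat.one_mem_divisors.mpr (by omega)
    · exact Nat.mem_divisors_self _ (by omega)
  calc n + 1 = ∑ x ∈ ({1, n} : Finset ℕ), x := by
        rw [Finset.sum_pair (by omega : (1 : ℕ) ≠ n)]; omega
    _ ≤ ∑ x ∈ n.divisors, x := Finset.sum_le_sum_of_subset hsub

/-- Key impossibility: `σ(p^k) = 2 m²` (equivalently index 1) cannot happen. -/
private lemma opn_key (p k m : ℕ) (hp : p.Prime) (hp4 : p % 4 = 1) (hk4 : k % 4 = 1)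
    (hmodd : Odd m)
    (hs : ArithmeticFunction.sigma 1 (p ^ k) = 2 * m ^ 2)
    (ht : ArithmeticFunction.sigma 1 (m ^ 2) = p ^ k) : False := by
  have hp5 : 5 ≤ p := by have := hp.two_le; omega
  have hσpk : ArithmeticFunction.sigma 1 (p ^ k) = ∑ i ∈ Finset.range (k + 1), p ^ i :=
    ArithmeticFunction.sigma_one_apply_prime_pow hp
  obtain ⟨u, hu⟩ : ∃ u, k + 1 = 2 * u := ⟨(k + 1) / 2, by omega⟩
  have huodd : u % 2 = 1 := by omega
  have hu1 : 1 ≤ u := by omega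
  rcases Nat.lt_or_ge u 2 with hult | huge
  · -- u = 1, k = 1
    have hk1 : k = 1 := by omega
    subst hk1
    have hsp : 1 + p = 2 * m ^ 2 := by
      rw [hσpk] at hs
      simp [Finset.sum_range_succ] at hs
      omega
    have hm2 : 2 ≤ m := by
      rcases Nat.lt_or_ge m 2 with h | h
      · interval_cases m <;> simp_all
      · exact h
    have hm0 : m ≠ 0 := by omega
    set q := m.minFac with hqdef
    have hq : q.Prime := Nat.minFac_prime (by omega)
    have hqm : q ∣ m := Nat.minFac_dvd m
    have hqodd : q % 2 = 1 := by
      rcases hq.eq_two_or_odd with h2 | h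
      · exfalso
        have h2m : (2 : ℕ) ∣ m := h2 ▸ hqm
        rcases hmodd with ⟨j, hj⟩
        omega
      · exact h
    set a := m.factorization q with hadef
    have ha1 : 1 ≤ a := hq.factorization_pos_of_dvd hm0 hqm
    set c := m / q ^ a with hcdef
    have hmc : q ^ a * c = m := Nat.ordProj_mul_ordCompl_eq_self m q
    have hcop' : Nat.Coprime q c := Nat.coprime_ordCompl hq hm0
    have hm2eq : m ^ 2 = (q ^ a) ^ 2 * c ^ 2 := by rw [← hmc]; ring
    have hcopP : Nat.Coprime ((q ^ a) ^ 2) (c ^ 2) := Nat.Coprime.pow 2 2 (hcop'.pow_left a)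
    have hmul : ArithmeticFunction.sigma 1 ((q ^ a) ^ 2) * ArithmeticFunction.sigma 1 (c ^ 2)
        = p := by
      rw [← ArithmeticFunction.isMultiplicative_sigma.map_mul_of_coprime hcopP, ← hm2eq, ht,
        pow_one]
    have hdvd : ArithmeticFunction.sigma 1 ((q ^ a) ^ 2) ∣ p := ⟨_, hmul.symm⟩
    have hgt1 : 1 < ArithmeticFunction.sigma 1 ((q ^ a) ^ 2) := by
      have hq2 : 2 ≤ q := hq.two_le
      have hqa : q ≤ q ^ a := Nat.le_self_pow (by omega) q
      have h1 : 1 < (q ^ a) ^ 2 := by nlinarith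
      have := opn_sigma_ge_self (show 0 < (q ^ a) ^ 2 by omega)
      omega
    have hσq : ArithmeticFunction.sigma 1 ((q ^ a) ^ 2) = p :=
      ((Nat.dvd_prime hp).mp hdvd).resolve_left (by omega)
    have hσc : ArithmeticFunction.sigma 1 (c ^ 2) = 1 := by
      rw [hσq] at hmul
      have h' : p * ArithmeticFunction.sigma 1 (c ^ 2) = p * 1 := by rw [mul_one]; exact hmul
      exact Nat.eq_of_mul_eq_mul_left hp.pos h'
    have hc1 : c = 1 := by
      have hcpos : 0 < c := by
        rcases Nat.eq_zero_or_pos c with h | h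
        · rw [h, mul_zero] at hmc; omega
        · exact h
      have h2 := opn_sigma_ge_self (show 0 < c ^ 2 by positivity)
      have h3 : c ^ 2 ≤ 1 := by omega
      have h4 : c ≤ c ^ 2 := Nat.le_self_pow (by norm_num) c
      omega
    rw [hc1, mul_one] at hmc
    have hm2q : m ^ 2 = q ^ (2 * a) := by rw [← hmc]; ring
    have hσq' : ArithmeticFunction.sigma 1 (q ^ (2 * a)) = p := by
      have : (q ^ a) ^ 2 = q ^ (2 * a) := by ring
      rw [← this]; exact hσq
    have hsum : ∑ i ∈ Finset.range (2 * a + 1), q ^ i = p := by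
      rw [← ArithmeticFunction.sigma_one_apply_prime_pow hq]; exact hσq'
    have hS := opn_sum_succ q (2 * a)
    rw [hsum] at hS
    rw [hm2q] at hsp
    obtain ⟨w, hw⟩ : q ∣ q ^ (2 * a) := dvd_pow_self q (by omega)
    have hqd2 : q ∣ 2 := by
      have h2 : q * (∑ i ∈ Finset.range (2 * a), q ^ i) + 2 = 2 * (q * w) := by omega
      have h3 : q ∣ q * (∑ i ∈ Finset.range (2 * a), q ^ i) + 2 := by
        rw [h2]; exact ⟨2 * w, by ring⟩
      exact (Nat.dvd_add_right ⟨_, rfl⟩).mp h3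
    have := hq.two_le
    have := Nat.le_of_dvd (by norm_num) hqd2
    omega
  · -- u ≥ 2
    set A := ∑ i ∈ Finset.range u, p ^ i with hAdef
    have hpodd : p % 2 = 1 := by omega
    obtain ⟨B, hB⟩ : 2 ∣ p ^ u + 1 := by
      have : p ^ u % 2 = 1 := by rw [Nat.pow_mod, hpodd, Nat.one_pow]
      omega
    have hid : ArithmeticFunction.sigma 1 (p ^ k) = A * (p ^ u + 1) := by
      rw [hσpk, hu, opn_sum_two_mul]
    have hm2AB : m ^ 2 = A * B := by
      rw [hid, hB] at hs
      have h' : 2 * (A * B) = 2 * m ^ 2 := by rw [← hs]; ring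
      omega
    have hAodd : A % 2 = 1 := by
      have := opn_sum_pow_mod p 2 u (by omega)
      rw [← hAdef] at this; omega
    have hgeom := opn_geom_closed p (by omega) u
    rw [← hAdef] at hgeom
    have hcopAB : Nat.Coprime A B := by
      have hgA : Nat.gcd A B ∣ A := Nat.gcd_dvd_left A B
      have hgB : Nat.gcd A B ∣ B := Nat.gcd_dvd_right A B
      have hg2 : Nat.gcd A B ∣ 2 := by
        have h1 : Nat.gcd A B ∣ (p - 1) * A + 2 := by
          have he : (p - 1) * A + 2 = 2 * B := by omega
          rw [he]; exact hgB.mul_left 2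
        have h2 : Nat.gcd A B ∣ (p - 1) * A := hgA.mul_left _
        have := Nat.dvd_sub h1 h2
        simpa using this
      rcases (Nat.dvd_prime Nat.prime_two).mp hg2 with h | h
      · exact h
      · exfalso
        have h2A : (2 : ℕ) ∣ A := h ▸ hgA
        omega
    have hσm : ArithmeticFunction.sigma 1 A * ArithmeticFunction.sigma 1 B = p ^ k := by
      rw [← ArithmeticFunction.isMultiplicative_sigma.map_mul_of_coprime hcopAB, ← hm2AB, ht]
    obtain ⟨α, hαle, hα⟩ := (Nat.dvd_prime_pow hp).mp
      (⟨_, hσm.symm⟩ : ArithmeticFunction.sigma 1 A ∣ p ^ k)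
    obtain ⟨β, hβle, hβ⟩ := (Nat.dvd_prime_pow hp).mp
      (⟨_, by rw [mul_comm] at hσm; exact hσm.symm⟩ : ArithmeticFunction.sigma 1 B ∣ p ^ k)
    have hαβ : α + β = k := by
      have h' : p ^ (α + β) = p ^ k := by rw [pow_add, ← hα, ← hβ, hσm]
      exact Nat.pow_right_injective hp.two_le h'
    have hA1 : p ^ (u - 1) + 1 ≤ A := by
      have hsub : ({0, u - 1} : Finset ℕ) ⊆ Finset.range u := by
        intro x hx
        simp only [Finset.mem_insert, Finset.mem_singleton] at hx
        rcases hx with rfl | rfl <;> simp only [Finset.mem_range] <;> omega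
      have hle := Finset.sum_le_sum_of_subset (f := fun i => p ^ i) hsub
      rw [Finset.sum_pair (by omega : (0 : ℕ) ≠ u - 1)] at hle
      simpa [add_comm] using hle
    have hpu1pos : 1 ≤ p ^ (u - 1) := Nat.one_le_pow _ _ hp.pos
    have hAgt1 : 1 < A := by omega
    have hσA : A + 1 ≤ p ^ α := by rw [← hα]; exact opn_sigma_ge_succ hAgt1
    have hαu : u ≤ α := by
      have hlt : p ^ (u - 1) < p ^ α := by omega
      have := (Nat.pow_lt_pow_iff_right hp.one_lt).mp hlt
      omega
    have hpu : p ^ u = p * p ^ (u - 1) := by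
      conv_lhs => rw [show u = (u - 1) + 1 by omega]
      ring
    have hBgt1 : 1 < B := by
      have h25 : 25 ≤ p ^ u := by
        calc (25 : ℕ) = 5 ^ 2 := by norm_num
          _ ≤ p ^ 2 := Nat.pow_le_pow_left hp5 2
          _ ≤ p ^ u := Nat.pow_le_pow_right (by omega) huge
      omega
    have hσB : B + 1 ≤ p ^ β := by rw [← hβ]; exact opn_sigma_ge_succ hBgt1
    have hβu : u ≤ β := by
      have hlt : p ^ (u - 1) < p ^ β := by nlinarith
      have := (Nat.pow_lt_pow_iff_right hp.one_lt).mp hlt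
      omega
    omega

theorem stmt_1 (p k m : ℕ) (hp : p.Prime) (hp4 : p % 4 = 1) (hk4 : k % 4 = 1)
    (hcop : Nat.Coprime p m) (hodd : Odd (p ^ k * m ^ 2))
    (hperf : Nat.Perfect (p ^ k * m ^ 2)) :
    (ArithmeticFunction.sigma 1 (p ^ k) : ℚ) ≤ 2 / 3 * (m ^ 2 : ℚ) := by
  have hp5 : 5 ≤ p := by have := hp.two_le; omega
  have hNpos : 0 < p ^ k * m ^ 2 := hperf.2
  have hmpos : 0 < m := by
    rcases Nat.eq_zero_or_pos m with h | h
    · subst h; simp at hNpos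
    · exact h
  have hmodd : Odd m := by
    rcases Nat.odd_mul.mp hodd with ⟨h1, h2⟩
    rcases Nat.even_or_odd m with he | ho
    · exfalso
      obtain ⟨j, hj⟩ := he
      have hsq : m ^ 2 = 2 * (2 * j * j) := by rw [hj]; ring
      have := Nat.odd_iff.mp h2
      omega
    · exact ho
  have hcopN : Nat.Coprime (p ^ k) (m ^ 2) := (hcop.pow_right 2).pow_left k
  have hσN : ArithmeticFunction.sigma 1 (p ^ k) * ArithmeticFunction.sigma 1 (m ^ 2)
      = 2 * (p ^ k * m ^ 2) := by
    rw [← ArithmeticFunction.isMultiplicative_sigma.map_mul_of_coprime hcopN,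
      ArithmeticFunction.sigma_one_apply]
    exact (Nat.perfect_iff_sum_divisors_eq_two_mul hNpos).mp hperf
  have hσpk : ArithmeticFunction.sigma 1 (p ^ k) = ∑ i ∈ Finset.range (k + 1), p ^ i :=
    ArithmeticFunction.sigma_one_apply_prime_pow hp
  have hpnd : ¬ p ∣ ArithmeticFunction.sigma 1 (p ^ k) := by
    intro hdvd
    have hmod : ArithmeticFunction.sigma 1 (p ^ k) % p = 1 % p := by
      rw [hσpk, opn_sum_succ, Nat.mul_add_mod]
    have h1p : (1 : ℕ) % p = 1 := Nat.mod_eq_of_lt (by omega)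
    have := (Nat.dvd_iff_mod_eq_zero).mp hdvd
    omega
  have hcopσ : Nat.Coprime (ArithmeticFunction.sigma 1 (p ^ k)) (p ^ k) :=
    ((Nat.Prime.coprime_iff_not_dvd hp).mpr hpnd).symm.pow_right k
  have hdvd2 : ArithmeticFunction.sigma 1 (p ^ k) ∣ 2 * m ^ 2 := by
    have hd : ArithmeticFunction.sigma 1 (p ^ k) ∣ (2 * m ^ 2) * p ^ k := by
      rw [show (2 * m ^ 2) * p ^ k = 2 * (p ^ k * m ^ 2) by ring, ← hσN]
      exact dvd_mul_right _ _
    exact Nat.Coprime.dvd_of_dvd_mul_right hcopσ hd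
  obtain ⟨i, hi⟩ := hdvd2
  have hσ4 : ArithmeticFunction.sigma 1 (p ^ k) % 4 = 2 := by
    rw [hσpk]
    have := opn_sum_pow_mod p 4 (k + 1) hp4
    omega
  obtain ⟨d, hd, hdo⟩ : ∃ d, ArithmeticFunction.sigma 1 (p ^ k) = 2 * d ∧ d % 2 = 1 :=
    ⟨ArithmeticFunction.sigma 1 (p ^ k) / 2, by omega, by omega⟩
  have hmi : m ^ 2 = d * i := by
    have h' : 2 * m ^ 2 = 2 * (d * i) := by rw [hi, hd]; ring
    omega
  have hm21 : m ^ 2 % 2 = 1 := Nat.odd_iff.mp (hmodd.pow)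
  have hiodd : i % 2 = 1 := by
    rcases Nat.even_or_odd i with he | ho
    · exfalso
      obtain ⟨j, hj⟩ := he
      have : m ^ 2 = 2 * (d * j) := by rw [hmi, hj]; ring
      omega
    · exact Nat.odd_iff.mp ho
  have hine1 : i ≠ 1 := by
    intro h1
    have hs : ArithmeticFunction.sigma 1 (p ^ k) = 2 * m ^ 2 := by
      rw [h1, mul_one] at hi; omega
    have ht : ArithmeticFunction.sigma 1 (m ^ 2) = p ^ k := by
      have h2 : (2 * m ^ 2) * ArithmeticFunction.sigma 1 (m ^ 2)
          = (2 * m ^ 2) * p ^ k := by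
        calc (2 * m ^ 2) * ArithmeticFunction.sigma 1 (m ^ 2)
            = ArithmeticFunction.sigma 1 (p ^ k) * ArithmeticFunction.sigma 1 (m ^ 2) := by
              rw [hs]
          _ = 2 * (p ^ k * m ^ 2) := hσN
          _ = (2 * m ^ 2) * p ^ k := by ring
      exact Nat.eq_of_mul_eq_mul_left (by positivity) h2
    exact opn_key p k m hp hp4 hk4 hmodd hs ht
  have hipos : i ≠ 0 := by
    intro h0
    rw [h0, mul_zero] at hmi
    have : 0 < m ^ 2 := by positivity
    omega
  have hi3 : 3 ≤ i := by omega
  have hfin : 3 * ArithmeticFunction.sigma 1 (p ^ k) ≤ 2 * m ^ 2 := by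
    calc 3 * ArithmeticFunction.sigma 1 (p ^ k)
        ≤ i * ArithmeticFunction.sigma 1 (p ^ k) :=
          Nat.mul_le_mul_right _ hi3
      _ = 2 * m ^ 2 := by rw [mul_comm]; exact hi.symm
  have hq : ((3 : ℚ)) * (ArithmeticFunction.sigma 1 (p ^ k) : ℚ) ≤ 2 * ((m : ℚ)) ^ 2 := by
    exact_mod_cast hfin
  linarith
end

section
/- Let N = p^k · m^2 be an odd perfect number, where p is a prime with p ≡ k ≡ 1 (mod 4) and gcd(p, m) = 1. Then 8/5 < σ(m^2)/m^2 < 2. -/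
lemma geom_sum_mul_pred (p k : ℕ) (hp : 1 ≤ p) :
    (∑ j ∈ Finset.range (k + 1), p ^ j) * (p - 1) + 1 = p ^ (k + 1) := by
  induction k with
  | zero => simp; omega
  | succ n ih =>
    rw [Finset.sum_range_succ, add_mul]
    have hpn : 1 ≤ p ^ (n + 1) := Nat.one_le_pow _ _ hp
    have h2 : p ^ (n + 1) * (p - 1) = p ^ (n + 2) - p ^ (n + 1) := by
      rw [Nat.mul_sub_one]; ring_nf
    have h3 : p ^ (n + 1 + 1) = p ^ (n + 2) := by ring
    have h4 : p ^ (n + 1) ≤ p ^ (n + 2) := Nat.pow_le_pow_right hp (by omega)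
    omega

theorem stmt_2 (p k m : ℕ) (hp : p.Prime) (hp4 : p % 4 = 1) (hk4 : k % 4 = 1)
    (hcop : Nat.Coprime p m) (hodd : Odd (p ^ k * m ^ 2))
    (hperf : Nat.Perfect (p ^ k * m ^ 2)) :
    8 / 5 < (ArithmeticFunction.sigma 1 (m ^ 2) : ℚ) / (m ^ 2 : ℚ) ∧
      (ArithmeticFunction.sigma 1 (m ^ 2) : ℚ) / (m ^ 2 : ℚ) < 2 := by
  have hp2 := hp.two_le
  have hp5 : 5 ≤ p := by omega
  have hk1 : 1 ≤ k := by omega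
  have hm : 0 < m := by
    rcases Nat.eq_zero_or_pos m with h | h
    · exfalso; have := hperf.2; simp [h] at this
    · exact h
  set S := ArithmeticFunction.sigma 1 (p ^ k) with hSdef
  set T := ArithmeticFunction.sigma 1 (m ^ 2) with hTdef
  -- multiplicativity and perfection
  have hcop2 : Nat.Coprime (p ^ k) (m ^ 2) := Nat.Coprime.pow k 2 hcop
  have hN : 0 < p ^ k * m ^ 2 := hperf.2
  have hsum : ∑ i ∈ (p ^ k * m ^ 2).divisors, i = 2 * (p ^ k * m ^ 2) :=
    (Nat.perfect_iff_sum_divisors_eq_two_mul hN).mp hperf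
  have hmul : S * T = 2 * (p ^ k * m ^ 2) := by
    rw [hSdef, hTdef, ← ArithmeticFunction.isMultiplicative_sigma.map_mul_of_coprime hcop2,
      ArithmeticFunction.sigma_one_apply]
    exact hsum
  -- geometric sum facts about S
  have hSsum : S = ∑ j ∈ Finset.range (k + 1), p ^ j := by
    rw [hSdef, ArithmeticFunction.sigma_one_apply_prime_pow hp]
  have hgeo : S * (p - 1) + 1 = p ^ (k + 1) := by
    rw [hSsum]; exact geom_sum_mul_pred p k (by omega)
  have hSlt : p ^ k < S := by
    rw [hSsum]
    rcases Nat.exists_eq_add_of_le hk1 with ⟨k', rfl⟩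
    rw [Finset.sum_range_succ]
    have h1 : 1 ≤ ∑ j ∈ Finset.range (1 + k'), p ^ j := by
      calc 1 = p ^ 0 := (pow_zero p).symm
        _ ≤ ∑ j ∈ Finset.range (1 + k'), p ^ j :=
          Finset.single_le_sum (f := fun j => p ^ j) (fun _ _ => Nat.zero_le _)
            (Finset.mem_range.mpr (by omega))
    omega
  have hS0 : 0 < S := lt_trans (pow_pos (by omega : 0 < p) k) hSlt
  have hS2 : 4 * S < 5 * p ^ k := by
    have h1 : 4 * S * (p - 1) < 5 * p ^ k * (p - 1) := by
      have hpk1 : p ^ (k + 1) = p * p ^ k := by ring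
      have h4p : 4 * p ≤ 5 * (p - 1) := by omega
      calc 4 * S * (p - 1) = 4 * (S * (p - 1)) := by ring
        _ < 4 * p ^ (k + 1) := by omega
        _ = (4 * p) * p ^ k := by rw [hpk1]; ring
        _ ≤ (5 * (p - 1)) * p ^ k := Nat.mul_le_mul_right _ h4p
        _ = 5 * p ^ k * (p - 1) := by ring
    exact Nat.lt_of_mul_lt_mul_right h1
  -- natural number bounds on T
  have hlow : 8 * m ^ 2 < 5 * T := by
    have h1 : (8 * m ^ 2) * S < (5 * T) * S := by
      calc (8 * m ^ 2) * S = (4 * S) * (2 * m ^ 2) := by ring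
        _ < (5 * p ^ k) * (2 * m ^ 2) := by
          apply Nat.mul_lt_mul_of_lt_of_le hS2 (le_refl _)
          positivity
        _ = 5 * (2 * (p ^ k * m ^ 2)) := by ring
        _ = (5 * T) * S := by rw [← hmul]; ring
    exact Nat.lt_of_mul_lt_mul_right h1
  have hhigh : T < 2 * m ^ 2 := by
    have h1 : T * S < (2 * m ^ 2) * S := by
      calc T * S = S * T := by ring
        _ = 2 * (p ^ k * m ^ 2) := hmul
        _ = p ^ k * (2 * m ^ 2) := by ring
        _ < S * (2 * m ^ 2) := by
          apply Nat.mul_lt_mul_of_lt_of_le hSlt (le_refl _)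
          positivity
        _ = (2 * m ^ 2) * S := by ring
    exact Nat.lt_of_mul_lt_mul_right h1
  -- rational conclusion
  have hm2 : (0 : ℚ) < (m : ℚ) ^ 2 := by positivity
  constructor
  · rw [div_lt_div_iff₀ (by norm_num) hm2]
    have : (8 : ℚ) * (m : ℚ) ^ 2 < 5 * (T : ℚ) := by exact_mod_cast hlow
    linarith
  · rw [div_lt_iff₀ hm2]
    have : (T : ℚ) < 2 * (m : ℚ) ^ 2 := by exact_mod_cast hhigh
    linarith
end

section
/- Let N = p^k · m^2 be an odd perfect number, where p is a prime with p ≡ k ≡ 1 (mod 4) and gcd(p, m) = 1. Then σ(m^2) ≥ 3 · p^k. -/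
open Finset

private lemma opn_le_sigma {n : ℕ} (hn : n ≠ 0) : n ≤ ArithmeticFunction.sigma 1 n := by
  rw [ArithmeticFunction.sigma_one_apply]
  exact Finset.single_le_sum (f := fun d => d) (fun i _ => Nat.zero_le i)
    (Nat.mem_divisors_self n hn)

private lemma opn_add_one_le_sigma {n : ℕ} (hn : 2 ≤ n) :
    n + 1 ≤ ArithmeticFunction.sigma 1 n := by
  rw [ArithmeticFunction.sigma_one_apply]
  have h0 : n ≠ 0 := by omega
  have h1 : (1:ℕ) ∈ n.divisors := Nat.one_mem_divisors.mpr h0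
  have h2 : n ∈ n.divisors := Nat.mem_divisors_self n h0
  have hsub : ({1, n} : Finset ℕ) ⊆ n.divisors := by
    intro d hd
    simp only [Finset.mem_insert, Finset.mem_singleton] at hd
    rcases hd with h | h
    · rw [h]; exact h1
    · rw [h]; exact h2
  have h3 : ∑ d ∈ ({1, n} : Finset ℕ), d = 1 + n :=
    Finset.sum_pair (by omega : (1:ℕ) ≠ n)
  have h4 : ∑ d ∈ ({1, n} : Finset ℕ), d ≤ ∑ d ∈ n.divisors, d :=
    Finset.sum_le_sum_of_subset hsub
  omega

private lemma opn_sigma_eq_one {n : ℕ} (h : ArithmeticFunction.sigma 1 n = 1) : n = 1 := by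
  rcases Nat.eq_zero_or_pos n with rfl | hn
  · simp at h
  · have := opn_le_sigma (Nat.pos_iff_ne_zero.mp hn)
    omega

private lemma opn_geom_add (x a b : ℕ) :
    ∑ i ∈ range (a + b), x ^ i
      = (∑ i ∈ range a, x ^ i) + x ^ a * ∑ i ∈ range b, x ^ i := by
  rw [Finset.sum_range_add, Finset.mul_sum]
  simp [pow_add]

private lemma opn_geom_shift (x n : ℕ) :
    (∑ i ∈ range n, x ^ i) * x + 1 = (∑ i ∈ range n, x ^ i) + x ^ n := by
  have h1 : (∑ i ∈ range n, x ^ i) * x = ∑ i ∈ range n, x ^ (i + 1) := by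
    rw [Finset.sum_mul]
    exact Finset.sum_congr rfl fun i _ => (pow_succ x i).symm
  have h2 := Finset.sum_range_succ' (fun i => x ^ i) n
  have h3 := Finset.sum_range_succ (fun i => x ^ i) n
  simp only [pow_zero] at h2
  omega

private lemma opn_geom_mod_two {p : ℕ} (hp : p % 2 = 1) (n : ℕ) :
    (∑ i ∈ range n, p ^ i) % 2 = n % 2 := by
  rw [Finset.sum_nat_mod]
  have h : ∀ i ∈ range n, p ^ i % 2 = 1 := fun i _ => by
    simp [Nat.pow_mod, hp]
  rw [Finset.sum_congr rfl h, Finset.sum_const, card_range, smul_eq_mul, mul_one]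

private lemma opn_geom_ge {x n : ℕ} (hn : 1 ≤ n) :
    x ^ (n - 1) ≤ ∑ i ∈ range n, x ^ i :=
  Finset.single_le_sum (f := fun i => x ^ i) (fun i _ => Nat.zero_le _)
    (Finset.mem_range.mpr (by omega))

theorem stmt_3 (p k m : ℕ) (hp : p.Prime) (hp4 : p % 4 = 1) (hk4 : k % 4 = 1)
    (hcop : Nat.Coprime p m) (hodd : Odd (p ^ k * m ^ 2))
    (hperf : Nat.Perfect (p ^ k * m ^ 2)) :
    ArithmeticFunction.sigma 1 (m ^ 2) ≥ 3 * p ^ k := by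
  have hp2 : 2 ≤ p := hp.two_le
  have hp5 : 5 ≤ p := by omega
  have hpodd : p % 2 = 1 := by omega
  have hk1 : 1 ≤ k := by omega
  have hNpos : 0 < p ^ k * m ^ 2 := hperf.2
  have hm0 : m ≠ 0 := by
    rintro rfl
    simp at hNpos
  have hmodd : m % 2 = 1 := by
    rcases Nat.even_or_odd m with he | ho
    · exfalso
      rw [Nat.odd_mul] at hodd
      have h2 := hodd.2
      rw [Nat.odd_iff] at h2
      obtain ⟨c, hc⟩ := he
      have h5 : m ^ 2 = 2 * (2 * c * c) := by rw [hc]; ring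
      omega
    · exact Nat.odd_iff.mp ho
  have hE1 : ArithmeticFunction.sigma 1 (p ^ k) * ArithmeticFunction.sigma 1 (m ^ 2)
      = 2 * (p ^ k * m ^ 2) := by
    rw [← ArithmeticFunction.isMultiplicative_sigma.map_mul_of_coprime
      (Nat.Coprime.pow k 2 hcop)]
    rw [ArithmeticFunction.sigma_one_apply]
    exact (Nat.perfect_iff_sum_divisors_eq_two_mul hNpos).mp hperf
  have hσp_sum : ArithmeticFunction.sigma 1 (p ^ k) = ∑ i ∈ range (k + 1), p ^ i :=
    ArithmeticFunction.sigma_one_apply_prime_pow hp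
  have hσp_even : ArithmeticFunction.sigma 1 (p ^ k) % 2 = 0 := by
    rw [hσp_sum, opn_geom_mod_two hpodd]
    omega
  set u := ArithmeticFunction.sigma 1 (p ^ k) / 2 with hu_def
  have hu : ArithmeticFunction.sigma 1 (p ^ k) = 2 * u := by omega
  have hpk1 : 1 ≤ p ^ k := Nat.one_le_pow k p (by omega)
  have hu0 : u ≠ 0 := by
    have := opn_le_sigma (n := p ^ k) (by omega)
    omega
  have hcp_sigma : Nat.Coprime p (ArithmeticFunction.sigma 1 (p ^ k)) := by
    have hsum : ArithmeticFunction.sigma 1 (p ^ k)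
        = 1 + (∑ i ∈ range k, p ^ i) * p := by
      rw [hσp_sum]
      have h2 := Finset.sum_range_succ' (fun i => p ^ i) k
      simp only [pow_zero] at h2
      rw [h2, Finset.sum_mul]
      have h3 : ∀ i ∈ range k, p ^ (i + 1) = p ^ i * p := fun i _ => by ring
      rw [Finset.sum_congr rfl h3]
      omega
    rw [hsum]
    exact (Nat.coprime_add_mul_right_right p 1 (∑ i ∈ range k, p ^ i)).mpr
      (Nat.coprime_one_right p)
  have hE4 : u * ArithmeticFunction.sigma 1 (m ^ 2) = p ^ k * m ^ 2 := by
    have h1 : 2 * (u * ArithmeticFunction.sigma 1 (m ^ 2)) = 2 * (p ^ k * m ^ 2) := by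
      rw [← hE1, hu]
      ring
    exact Nat.eq_of_mul_eq_mul_left (by omega) h1
  have hcpu : Nat.Coprime u (p ^ k) := by
    have h1 : Nat.Coprime p u :=
      Nat.Coprime.coprime_dvd_right ⟨2, by omega⟩ hcp_sigma
    exact (h1.pow_left k).symm
  have hudvd : u ∣ m ^ 2 := by
    have h1 : u ∣ m ^ 2 * p ^ k :=
      ⟨ArithmeticFunction.sigma 1 (m ^ 2), by rw [hE4]; ring⟩
    exact hcpu.dvd_of_dvd_mul_right h1
  obtain ⟨t, hm2ut⟩ := hudvd
  have hσm : ArithmeticFunction.sigma 1 (m ^ 2) = p ^ k * t := by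
    have h1 : u * ArithmeticFunction.sigma 1 (m ^ 2) = u * (p ^ k * t) := by
      rw [hE4, hm2ut]
      ring
    exact Nat.eq_of_mul_eq_mul_left (by omega) h1
  have hm2odd : m ^ 2 % 2 = 1 := by
    rw [Nat.pow_mod, hmodd]
  have ht0 : t ≠ 0 := by
    intro h
    rw [h, Nat.mul_zero] at hm2ut
    omega
  have htodd : t % 2 = 1 := by
    rcases Nat.even_or_odd t with he | ho
    · exfalso
      obtain ⟨c, hc⟩ := he
      have h2 : m ^ 2 = 2 * (u * c) := by rw [hm2ut, hc]; ring
      omega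
    · exact Nat.odd_iff.mp ho
  -- main claim : t ≠ 1
  have htne1 : t ≠ 1 := by
    intro ht1
    rw [ht1, Nat.mul_one] at hm2ut
    have hσm1 : ArithmeticFunction.sigma 1 (m ^ 2) = p ^ k := by
      rw [hσm, ht1, Nat.mul_one]
    have hσp2m : ArithmeticFunction.sigma 1 (p ^ k) = 2 * m ^ 2 := by
      rw [hu, ← hm2ut]
    set s := (k + 1) / 2 with hs_def
    have hks : k + 1 = 2 * s := by omega
    have hsodd : s % 2 = 1 := by omega
    have hs1 : 1 ≤ s := by omega
    set A := ∑ i ∈ range s, p ^ i with hA_def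
    have hAodd : A % 2 = 1 := by
      rw [hA_def, opn_geom_mod_two hpodd]
      omega
    have hA0 : A ≠ 0 := by omega
    have hsplit : ArithmeticFunction.sigma 1 (p ^ k) = A + p ^ s * A := by
      rw [hσp_sum, hks, (by omega : 2 * s = s + s), opn_geom_add]
    have hps_odd : p ^ s % 2 = 1 := by
      simp [Nat.pow_mod, hpodd]
    set B := (p ^ s + 1) / 2 with hB_def
    have hB : p ^ s + 1 = 2 * B := by omega
    have hps5 : 5 ≤ p ^ s := by
      calc (5:ℕ) ≤ p := hp5
      _ = p ^ 1 := (pow_one p).symm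
      _ ≤ p ^ s := Nat.pow_le_pow_right (by omega) hs1
    have hB3 : 3 ≤ B := by omega
    have hm2AB : m ^ 2 = A * B := by
      have h1 : 2 * m ^ 2 = 2 * (A * B) := by
        rw [← hσp2m, hsplit]
        have h2 : A + p ^ s * A = A * (p ^ s + 1) := by ring
        rw [h2, hB]
        ring
      exact Nat.eq_of_mul_eq_mul_left (by omega) h1
    have hshift := opn_geom_shift p s
    rw [← hA_def] at hshift
    have hcopAB : Nat.Coprime A B := by
      have hkey : A * p + 2 = A + 2 * B := by omega
      have hgA : Nat.gcd A B ∣ A := Nat.gcd_dvd_left A B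
      have hgB : Nat.gcd A B ∣ B := Nat.gcd_dvd_right A B
      have hg1 : Nat.gcd A B ∣ A * p + 2 := by
        rw [hkey]
        exact Nat.dvd_add hgA (Dvd.dvd.mul_left hgB 2)
      have hg2 : Nat.gcd A B ∣ A * p := Dvd.dvd.mul_right hgA p
      have hg3 : Nat.gcd A B ∣ 2 := by
        have h4 := Nat.dvd_sub hg1 hg2
        simpa using h4
      have hgodd : Nat.gcd A B % 2 = 1 := by
        obtain ⟨c, hc⟩ := hgA
        rcases Nat.even_or_odd (Nat.gcd A B) with he | ho
        · exfalso
          obtain ⟨d, hd⟩ := he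
          have h5 : A = 2 * (d * c) := by rw [hc, hd]; ring
          omega
        · exact Nat.odd_iff.mp ho
      have hgle : Nat.gcd A B ≤ 2 := Nat.le_of_dvd (by omega) hg3
      exact (by omega : Nat.gcd A B = 1)
    have hσAB : ArithmeticFunction.sigma 1 A * ArithmeticFunction.sigma 1 B = p ^ k := by
      rw [← ArithmeticFunction.isMultiplicative_sigma.map_mul_of_coprime hcopAB,
        ← hm2AB, hσm1]
    obtain ⟨α, hαk, hσA⟩ := (Nat.dvd_prime_pow hp).mp
      (⟨ArithmeticFunction.sigma 1 B, hσAB.symm⟩ :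
        ArithmeticFunction.sigma 1 A ∣ p ^ k)
    obtain ⟨β, hβk, hσB⟩ := (Nat.dvd_prime_pow hp).mp
      (⟨ArithmeticFunction.sigma 1 A, by rw [← hσAB]; ring⟩ :
        ArithmeticFunction.sigma 1 B ∣ p ^ k)
    have hαβ : α + β = k := by
      have h1 : p ^ (α + β) = p ^ k := by
        rw [pow_add, ← hσA, ← hσB, hσAB]
      exact Nat.pow_right_injective hp2 h1
    have hβs : s ≤ β := by
      by_contra hcon
      push_neg at hcon
      have hβle : β ≤ s - 1 := by omega
      have h1 : p ^ β ≤ p ^ (s - 1) := Nat.pow_le_pow_right (by omega) hβle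
      have h2 : B + 1 ≤ p ^ β := by
        rw [← hσB]
        exact opn_add_one_le_sigma (by omega)
      have h6 : p ^ s = p * p ^ (s - 1) := by
        rw [← pow_succ']
        congr 1
        omega
      have h4 : 5 * p ^ (s - 1) ≤ p ^ s := by
        rw [h6]
        exact Nat.mul_le_mul hp5 (Nat.le_refl _)
      have h5 : 1 ≤ p ^ (s - 1) := Nat.one_le_pow _ _ (by omega)
      omega
    have hAge : p ^ (s - 1) ≤ A := opn_geom_ge hs1
    have hA_le : A ≤ ArithmeticFunction.sigma 1 A := opn_le_sigma hA0
    have hαs : s - 1 ≤ α := by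
      have h2 : p ^ (s - 1) ≤ p ^ α := by omega
      exact (Nat.pow_le_pow_iff_right (by omega : 1 < p)).mp h2
    have hαeq : α = s - 1 := by omega
    have hσA_le : ArithmeticFunction.sigma 1 A ≤ A := by
      rw [hσA, hαeq]
      exact hAge
    have hA1 : A = 1 := by
      by_contra hcon
      have hA2 : 2 ≤ A := by omega
      have := opn_add_one_le_sigma hA2
      omega
    have hseq1 : s = 1 := by
      by_contra hcon
      have h1 : p ^ (s - 1) ≤ A := hAge
      have h2 : p ≤ p ^ (s - 1) := by
        calc p = p ^ 1 := (pow_one p).symm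
        _ ≤ p ^ (s - 1) := Nat.pow_le_pow_right (by omega) (by omega)
      omega
    have hkeq1 : k = 1 := by omega
    have hm2B : m ^ 2 = B := by rw [hm2AB, hA1, one_mul]
    have hpm : p + 1 = 2 * m ^ 2 := by
      rw [hm2B, ← hB, hseq1, pow_one]
    have hσmp : ArithmeticFunction.sigma 1 (m ^ 2) = p := by
      rw [hσm1, hkeq1, pow_one]
    have hm2 : 2 ≤ m := by
      rcases Nat.lt_or_ge m 2 with h | h
      · exfalso
        have hm1 : m = 1 := by omega
        rw [hm1, one_pow] at hpm
        omega
      · exact h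
    -- m is a prime power q^a times coprime part w
    set q := m.minFac with hq_def
    have hq : q.Prime := Nat.minFac_prime (by omega)
    have hqdvd : q ∣ m := Nat.minFac_dvd m
    have hqodd : q % 2 = 1 := by
      rcases Nat.even_or_odd q with he | ho
      · exfalso
        obtain ⟨c, hc⟩ := he
        obtain ⟨d, hd⟩ := hqdvd
        have h5 : m = 2 * (c * d) := by rw [hd, hc]; ring
        omega
      · exact Nat.odd_iff.mp ho
    have hq3 : 3 ≤ q := by
      have := hq.two_le
      omega
    set a := m.factorization q with ha_def
    set w := m / q ^ a with hw_def
    have hma : m = q ^ a * w := by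
      rw [hw_def, ha_def]
      exact (Nat.ordProj_mul_ordCompl_eq_self m q).symm
    have ha1 : 1 ≤ a := by
      rw [ha_def]
      exact hq.factorization_pos_of_dvd hm0 hqdvd
    have hcqw : Nat.Coprime q w := Nat.coprime_ordCompl hq hm0
    have hm2fac : m ^ 2 = q ^ (a * 2) * w ^ 2 := by
      rw [hma, mul_pow, ← pow_mul]
    have hσfac : ArithmeticFunction.sigma 1 (q ^ (a * 2)) *
        ArithmeticFunction.sigma 1 (w ^ 2) = p := by
      rw [← ArithmeticFunction.isMultiplicative_sigma.map_mul_of_coprime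
        (Nat.Coprime.pow (a * 2) 2 hcqw), ← hm2fac, hσmp]
    have hq2a9 : 9 ≤ q ^ (a * 2) := by
      calc (9:ℕ) = 3 ^ 2 := by norm_num
      _ ≤ q ^ 2 := Nat.pow_le_pow_left hq3 2
      _ ≤ q ^ (a * 2) := Nat.pow_le_pow_right (by omega) (by omega)
    have hσq_ne1 : ArithmeticFunction.sigma 1 (q ^ (a * 2)) ≠ 1 := by
      intro h
      have := opn_sigma_eq_one h
      omega
    have hσq_p : ArithmeticFunction.sigma 1 (q ^ (a * 2)) = p := by
      rcases (Nat.dvd_prime hp).mp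
        (⟨ArithmeticFunction.sigma 1 (w ^ 2), hσfac.symm⟩ :
          ArithmeticFunction.sigma 1 (q ^ (a * 2)) ∣ p) with h | h
      · exact absurd h hσq_ne1
      · exact h
    have hσw1 : ArithmeticFunction.sigma 1 (w ^ 2) = 1 := by
      rw [hσq_p] at hσfac
      have h1 : p * ArithmeticFunction.sigma 1 (w ^ 2) = p * 1 := by
        rw [hσfac, Nat.mul_one]
      exact Nat.eq_of_mul_eq_mul_left (by omega) h1
    have hw1 : w = 1 := by
      have h1 := opn_sigma_eq_one hσw1
      exact (pow_eq_one_iff.mp h1).resolve_right (by norm_num : (2:ℕ) ≠ 0)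
    have hmq : m = q ^ a := by rw [hma, hw1, Nat.mul_one]
    -- final contradiction via geometric identity
    have hσq_sum : ArithmeticFunction.sigma 1 (q ^ (a * 2))
        = (∑ i ∈ range (a * 2), q ^ i) + q ^ (a * 2) := by
      rw [ArithmeticFunction.sigma_one_apply_prime_pow hq, Finset.sum_range_succ]
    set X := ∑ i ∈ range (a * 2), q ^ i with hX_def
    have hX1 : 1 ≤ X := by
      have h0 : q ^ 0 ≤ X :=
        Finset.single_le_sum (f := fun i => q ^ i) (fun i _ => Nat.zero_le _)
          (Finset.mem_range.mpr (by omega : 0 < a * 2))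
      simpa using h0
    have hpX : p = X + q ^ (a * 2) := by rw [← hσq_p, hσq_sum]
    have hm2q : m ^ 2 = q ^ (a * 2) := by rw [hmq, ← pow_mul]
    have h2q : 2 * q ^ (a * 2) = p + 1 := by omega
    have hqX : q ^ (a * 2) = X + 1 := by omega
    have hshiftq := opn_geom_shift q (a * 2)
    rw [← hX_def] at hshiftq
    have hq2 : X * q = X * 2 := by omega
    have hqis2 : q = 2 := Nat.eq_of_mul_eq_mul_left (by omega) hq2
    omega
  -- conclude
  have ht3 : 3 ≤ t := by omega
  rw [ge_iff_le, hσm]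
  calc 3 * p ^ k = p ^ k * 3 := by ring
  _ ≤ p ^ k * t := Nat.mul_le_mul (Nat.le_refl _) ht3
end

section
/- Let N = p^k · m^2 be an odd perfect number, where p is a prime with p ≡ k ≡ 1 (mod 4) and gcd(p, m) = 1. Then 57/20 < σ(p^k)/p^k + σ(m^2)/m^2 < 3. -/
lemma aux_geom_lt (p : ℕ) (hp : 5 ≤ p) : ∀ k, 4 * (∑ i ∈ Finset.range (k+1), p^i) < 5 * p^k := by
  intro k
  induction k with
  | zero => simp
  | succ k ih =>
    rw [Finset.sum_range_succ]
    have h1 : 5 * p ^ k ≤ p ^ (k+1) := by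
      rw [pow_succ, mul_comm (p^k) p]
      exact Nat.mul_le_mul_right _ hp
    calc 4 * ((∑ i ∈ Finset.range (k+1), p^i) + p^(k+1))
        = 4 * (∑ i ∈ Finset.range (k+1), p^i) + 4 * p^(k+1) := by ring
      _ < 5 * p^k + 4 * p^(k+1) := by omega
      _ ≤ p^(k+1) + 4 * p^(k+1) := by omega
      _ = 5 * p^(k+1) := by ring

theorem stmt_4 (p k m : ℕ) (hp : p.Prime) (hp4 : p % 4 = 1) (hk4 : k % 4 = 1)
    (hcop : Nat.Coprime p m) (hodd : Odd (p ^ k * m ^ 2))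
    (hperf : Nat.Perfect (p ^ k * m ^ 2)) :
    57 / 20 < (ArithmeticFunction.sigma 1 (p ^ k) : ℚ) / (p ^ k : ℚ) + (ArithmeticFunction.sigma 1 (m ^ 2) : ℚ) / (m ^ 2 : ℚ) ∧
      (ArithmeticFunction.sigma 1 (p ^ k) : ℚ) / (p ^ k : ℚ) + (ArithmeticFunction.sigma 1 (m ^ 2) : ℚ) / (m ^ 2 : ℚ) < 3 := by
  have hk1 : 1 ≤ k := by omega
  have hp5 : 5 ≤ p := by
    have := hp.two_le
    omega
  have hppos : 0 < p := by omega
  have hNpos : 0 < p ^ k * m ^ 2 := hperf.2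
  have hmpos : 0 < m := by
    rcases Nat.eq_zero_or_pos m with h | h
    · simp [h] at hNpos
    · exact h
  -- sigma of prime power as sum
  have hsig : (ArithmeticFunction.sigma 1) (p ^ k) = ∑ i ∈ Finset.range (k+1), p ^ i := by
    rw [ArithmeticFunction.sigma_one_apply, Nat.sum_divisors_prime_pow hp]
  have hlt1 : p ^ k < (ArithmeticFunction.sigma 1) (p ^ k) := by
    rw [hsig, Finset.sum_range_succ]
    have : 0 < ∑ i ∈ Finset.range k, p ^ i := by
      apply Finset.sum_pos
      · intro i _; exact Nat.pow_pos (n := i) hppos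
      · exact Finset.nonempty_range_iff.mpr (by omega)
    omega
  have hlt2 : 4 * (ArithmeticFunction.sigma 1) (p ^ k) < 5 * p ^ k := by
    rw [hsig]; exact aux_geom_lt p hp5 k
  -- multiplicativity and perfectness
  have hcop2 : Nat.Coprime (p ^ k) (m ^ 2) := Nat.Coprime.pow _ _ hcop
  have hmul : (ArithmeticFunction.sigma 1) (p ^ k * m ^ 2)
      = (ArithmeticFunction.sigma 1) (p ^ k) * (ArithmeticFunction.sigma 1) (m ^ 2) :=
    ArithmeticFunction.isMultiplicative_sigma.map_mul_of_coprime hcop2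
  have hperf' : (ArithmeticFunction.sigma 1) (p ^ k * m ^ 2) = 2 * (p ^ k * m ^ 2) := by
    rw [ArithmeticFunction.sigma_one_apply]
    exact (Nat.perfect_iff_sum_divisors_eq_two_mul hNpos).mp hperf
  have hAB : (ArithmeticFunction.sigma 1) (p ^ k) * (ArithmeticFunction.sigma 1) (m ^ 2)
      = 2 * (p ^ k * m ^ 2) := by rw [← hmul, hperf']
  -- move to ℚ
  set A : ℚ := ((ArithmeticFunction.sigma 1) (p ^ k) : ℚ) with hA
  set B : ℚ := ((ArithmeticFunction.sigma 1) (m ^ 2) : ℚ) with hB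
  set P : ℚ := ((p : ℚ) ^ k) with hPd
  set M : ℚ := ((m : ℚ) ^ 2) with hMd
  have hPpos : (0:ℚ) < P := by
    rw [hPd]; positivity
  have hMpos : (0:ℚ) < M := by
    rw [hMd]; positivity
  have hPA : P < A := by rw [hPd, hA]; exact_mod_cast hlt1
  have hA5 : 4 * A < 5 * P := by rw [hPd, hA]; exact_mod_cast hlt2
  have hABQ : A * B = 2 * (P * M) := by
    rw [hA, hB, hPd, hMd]; exact_mod_cast hAB
  have hApos : (0:ℚ) < A := lt_trans hPpos hPA
  have hBpos : (0:ℚ) < B := by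
    nlinarith [mul_pos hPpos hMpos]
  have hsum : A / P + B / M = (A * M + P * B) / (P * M) := by
    field_simp
  have hPM : (0:ℚ) < P * M := mul_pos hPpos hMpos
  constructor
  · rw [hsum, lt_div_iff₀ hPM]
    nlinarith [mul_pos (mul_pos hPpos hMpos) hApos, mul_pos hMpos (mul_pos (sub_pos.2 hPA) hApos),
      mul_pos hMpos (mul_pos (sub_pos.2 (show 4*A < 5*P from hA5)) (sub_pos.2 (show 5*A < 8*P by nlinarith)))]
  · rw [hsum, div_lt_iff₀ hPM]
    nlinarith [mul_pos hMpos (mul_pos (sub_pos.2 hPA) (sub_pos.2 (show A < 2*P by nlinarith)))]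
end

section
/- Let N = p^k · m^2 be an odd perfect number, where p is a prime with p ≡ k ≡ 1 (mod 4) and gcd(p, m) = 1. Then σ(p^k)/m^2 + σ(m^2)/p^k ≥ 11/3. -/
open Finset

notation "σ₁" => ArithmeticFunction.sigma 1

namespace OPN11



lemma sigma_eq_sum (n : ℕ) : σ₁ n = ∑ d ∈ n.divisors, d :=
  ArithmeticFunction.sigma_one_apply n

lemma self_le_sigma {n : ℕ} (hn : n ≠ 0) : n ≤ σ₁ n := by
  rw [sigma_eq_sum]
  exact Finset.single_le_sum (fun i _ => Nat.zero_le i) (Nat.mem_divisors_self n hn)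

lemma sigma_mul {a b : ℕ} (h : Nat.Coprime a b) : σ₁ (a * b) = σ₁ a * σ₁ b :=
  ArithmeticFunction.isMultiplicative_sigma.map_mul_of_coprime h

lemma sigma_prime_pow {p : ℕ} (hp : p.Prime) (k : ℕ) :
    σ₁ (p ^ k) = ∑ i ∈ range (k + 1), p ^ i :=
  ArithmeticFunction.sigma_one_apply_prime_pow hp

/-- geometric sum identity in ℕ : (p-1) * ∑_{i<n} p^i = p^n - 1 -/
lemma geom_mul {p : ℕ} (hp : 1 ≤ p) (n : ℕ) :
    (p - 1) * ∑ i ∈ range n, p ^ i = p ^ n - 1 := by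
  induction n with
  | zero => simp
  | succ n ih =>
    rw [Finset.sum_range_succ, Nat.mul_add, ih]
    have h1 : 1 ≤ p ^ n := Nat.one_le_pow _ _ hp
    have hps : p ^ (n + 1) = p * p ^ n := by rw [pow_succ]; ring
    have h3 : (p - 1) * p ^ n + 1 * p ^ n = p * p ^ n := by
      rw [← Nat.add_mul]
      congr 1
      omega
    omega

/-- σ(p^k) = 1 + p * c for some c -/
lemma sigma_prime_pow_one_add {p : ℕ} (hp : p.Prime) (k : ℕ) :
    ∃ c, σ₁ (p ^ k) = 1 + p * c := by
  rw [sigma_prime_pow hp]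
  refine ⟨∑ i ∈ range k, p ^ i, ?_⟩
  rw [Finset.sum_range_succ' (fun i => p ^ i) k]
  rw [Finset.mul_sum]
  simp only [pow_zero]
  rw [add_comm]
  congr 1
  exact Finset.sum_congr rfl (fun i _ => by ring)

lemma cast_sum_pow_zmod (n : ℕ) {p q : ℕ} (hq : (p : ZMod q) = 1) :
    ((∑ i ∈ range n, p ^ i : ℕ) : ZMod q) = (n : ZMod q) := by
  push_cast
  rw [Finset.sum_congr rfl (fun i _ => by rw [hq, one_pow])]
  simp

lemma sum_pow_mod_two {p n : ℕ} (hpodd : p % 2 = 1) :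
    (∑ i ∈ range n, p ^ i) % 2 = n % 2 := by
  have hcast : ((∑ i ∈ range n, p ^ i : ℕ) : ZMod 2) = (n : ZMod 2) := by
    apply cast_sum_pow_zmod
    have h1 : ((p % 2 : ℕ) : ZMod 2) = ((p : ℕ) : ZMod 2) := ZMod.natCast_mod p 2
    rw [← h1, hpodd]; norm_num
  have := (ZMod.natCast_eq_natCast_iff' (∑ i ∈ range n, p ^ i) n 2).mp hcast
  simpa using this

set_option maxHeartbeats 1000000 in
/-- The key hard lemma (Dandapat–Hunsucker–Pomerance):
for an Euler-form odd perfect number we cannot have σ(m²) = p^k. -/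
lemma index_ne_one {p k m : ℕ} (hp : p.Prime) (hp4 : p % 4 = 1) (hk4 : k % 4 = 1)
    (hmodd : Odd m) (h1 : σ₁ (m ^ 2) = p ^ k) (h2 : σ₁ (p ^ k) = 2 * m ^ 2) : False := by
  have hp2 : 2 ≤ p := hp.two_le
  have hp5 : 5 ≤ p := by
    rcases Nat.lt_or_ge p 5 with h | h
    · interval_cases p <;> omega
    · exact h
  have hp1 : 1 ≤ p := by omega
  have hpodd : p % 2 = 1 := by omega
  have hm1 : m % 2 = 1 := Nat.odd_iff.mp hmodd
  obtain ⟨j, hj⟩ : ∃ j, k = 4 * j + 1 := ⟨k / 4, by omega⟩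
  set h : ℕ := 2 * j + 1 with hh
  have hk : k + 1 = h + h := by omega
  set S : ℕ := ∑ i ∈ range h, p ^ i with hS
  -- factorization σ(p^k) = S * (p^h + 1)
  have hsplit : σ₁ (p ^ k) = S * (p ^ h + 1) := by
    rw [sigma_prime_pow hp, hk, Finset.sum_range_add]
    have hc : ∀ i ∈ range h, p ^ (h + i) = p ^ h * p ^ i := fun i _ => pow_add p h i
    rw [Finset.sum_congr rfl hc, ← Finset.mul_sum]
    ring
  -- S is odd and positive
  have hSodd : S % 2 = 1 := by
    rw [hS, sum_pow_mod_two hpodd]; omega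
  have hSpos : 0 < S := by omega
  -- p^h is odd
  have hphodd : p ^ h % 2 = 1 := Nat.odd_iff.mp (Odd.pow (Nat.odd_iff.mpr hpodd))
  have hphpos : 1 ≤ p ^ h := Nat.one_le_pow _ _ hp1
  set B : ℕ := (p ^ h + 1) / 2 with hB
  have hB2 : p ^ h + 1 = 2 * B := by omega
  have hSB : S * B = m ^ 2 := by
    have hx : S * (2 * B) = 2 * m ^ 2 := by rw [← hB2, ← hsplit, h2]
    have hx2 : 2 * (S * B) = 2 * m ^ 2 := by rw [← hx]; ring
    omega
  -- coprimality of S and B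
  have hSdvd : S ∣ p ^ h - 1 := ⟨p - 1, by rw [Nat.mul_comm, geom_mul hp1]⟩
  have hcopSB : Nat.Coprime S B := by
    have hg1 : Nat.gcd S B ∣ p ^ h - 1 := dvd_trans (Nat.gcd_dvd_left S B) hSdvd
    have hg2 : Nat.gcd S B ∣ p ^ h + 1 := dvd_trans (Nat.gcd_dvd_right S B) ⟨2, by omega⟩
    have hg3 : Nat.gcd S B ∣ 2 := by
      have hsub := Nat.dvd_sub hg2 hg1
      have heq : p ^ h + 1 - (p ^ h - 1) = 2 := by omega
      rwa [heq] at hsub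
    have hgS : Nat.gcd S B ∣ S := Nat.gcd_dvd_left S B
    have hgodd : ¬ (2 ∣ Nat.gcd S B) := by
      intro h2g
      have : 2 ∣ S := dvd_trans h2g hgS
      omega
    have hgle : Nat.gcd S B ≤ 2 := Nat.le_of_dvd (by norm_num) hg3
    have hgpos : Nat.gcd S B ≠ 0 := by
      intro h0
      have := Nat.eq_zero_of_gcd_eq_zero_left h0
      omega
    have hne : Nat.gcd S B ≠ 2 := by
      intro he
      exact hgodd (by rw [he])
    unfold Nat.Coprime
    omega
  -- S and B are perfect squares
  obtain ⟨s, hs⟩ : ∃ s, S = s ^ 2 := by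
    refine exists_eq_pow_of_mul_eq_pow (a := S) (b := B) ?_ hSB
    rw [Nat.isUnit_iff]
    exact hcopSB
  obtain ⟨t, ht⟩ : ∃ t, B = t ^ 2 := by
    refine exists_eq_pow_of_mul_eq_pow (a := B) (b := S) ?_ (by rw [mul_comm]; exact hSB)
    rw [Nat.isUnit_iff]
    show Nat.gcd B S = 1
    rw [Nat.gcd_comm]
    exact hcopSB
  have hm_st : m = s * t := by
    have hx : (s * t) ^ 2 = m ^ 2 := by rw [mul_pow, ← hs, ← ht, hSB]
    exact (Nat.pow_left_injective two_ne_zero hx).symm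
  have hcopst : Nat.Coprime s t := by
    have h1' : s ∣ S := hs ▸ dvd_pow_self s two_ne_zero
    have h2' : t ∣ B := ht ▸ dvd_pow_self t two_ne_zero
    exact Nat.Coprime.coprime_dvd_right h2' (Nat.Coprime.coprime_dvd_left h1' hcopSB)
  -- σ(s²) and σ(t²) are powers of p
  have hsig_st : σ₁ (s ^ 2) * σ₁ (t ^ 2) = p ^ k := by
    rw [← sigma_mul (Nat.Coprime.pow _ _ hcopst), ← mul_pow, ← hm_st, h1]
  obtain ⟨a, ha_le, ha⟩ : ∃ a ≤ k, σ₁ (s ^ 2) = p ^ a :=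
    (Nat.dvd_prime_pow hp).mp ⟨σ₁ (t ^ 2), hsig_st.symm⟩
  obtain ⟨b, hb_le, hb⟩ : ∃ b ≤ k, σ₁ (t ^ 2) = p ^ b :=
    (Nat.dvd_prime_pow hp).mp ⟨σ₁ (s ^ 2), by rw [← hsig_st]; ring⟩
  have hab : a + b = k := by
    have hx : p ^ (a + b) = p ^ k := by rw [pow_add, ← ha, ← hb, hsig_st]
    exact Nat.pow_right_injective hp2 hx
  have hs_pos : 0 < s := by
    rcases Nat.eq_zero_or_pos s with h0 | h0
    · exfalso
      have hS0 : S = 0 := by rw [hs, h0]; ring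
      omega
    · exact h0
  have ht_pos : 0 < t := by
    rcases Nat.eq_zero_or_pos t with h0 | h0
    · exfalso
      have hB0 : B = 0 := by rw [ht, h0]; ring
      omega
    · exact h0
  -- case split on j
  rcases Nat.eq_zero_or_pos j with hj0 | hjpos
  · -- h = 1, k = 1 : σ(m²) = p, p + 1 = 2m²
    subst hj0
    have hh1 : h = 1 := by omega
    have hk1 : k = 1 := by omega
    have hS1 : S = 1 := by rw [hS, hh1]; simp
    have hBm : B = m ^ 2 := by rw [← hSB, hS1, one_mul]
    have hpm : p + 1 = 2 * m ^ 2 := by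
      have : p ^ h = p := by rw [hh1, pow_one]
      omega
    have hsigm : σ₁ (m ^ 2) = p := by rw [h1, hk1, pow_one]
    -- m > 1
    have hm_ne : m ≠ 1 := by
      intro hm'
      rw [hm'] at hpm; omega
    have hm0 : m ≠ 0 := by omega
    -- m is a prime power
    set q : ℕ := m.minFac with hq
    have hqp : q.Prime := Nat.minFac_prime hm_ne
    have hqdvd : q ∣ m := Nat.minFac_dvd m
    set e : ℕ := m.factorization q with he
    have hepos : 0 < e := hqp.factorization_pos_of_dvd hm0 hqdvd
    set v : ℕ := m / q ^ e with hv
    have huv : q ^ e * v = m := Nat.ordProj_mul_ordCompl_eq_self m q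
    have hcop_qv : Nat.Coprime q v := Nat.coprime_ordCompl hqp hm0
    have hcop_uv : Nat.Coprime (q ^ e) v := Nat.Coprime.pow_left e hcop_qv
    have hm2eq : m ^ 2 = (q ^ e) ^ 2 * v ^ 2 := by rw [← huv]; ring
    have hsig_split : σ₁ ((q ^ e) ^ 2) * σ₁ (v ^ 2) = p := by
      rw [← sigma_mul (Nat.Coprime.pow _ _ hcop_uv), ← hm2eq, hsigm]
    have hq0 : 0 < q := hqp.pos
    have hqe2 : 2 ≤ q ^ e := le_trans hqp.two_le (Nat.le_self_pow (by omega) q)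
    have hu_gt : 1 < (q ^ e) ^ 2 := Nat.one_lt_pow two_ne_zero (by omega)
    have hσu_gt : 1 < σ₁ ((q ^ e) ^ 2) :=
      lt_of_lt_of_le hu_gt (self_le_sigma (pow_ne_zero 2 (by omega)))
    have hσu_dvd : σ₁ ((q ^ e) ^ 2) ∣ p := ⟨σ₁ (v ^ 2), hsig_split.symm⟩
    have hσu_eq : σ₁ ((q ^ e) ^ 2) = p := by
      rcases (Nat.Prime.eq_one_or_self_of_dvd hp _ hσu_dvd) with h' | h'
      · omega
      · exact h'
    have hσv : σ₁ (v ^ 2) = 1 := by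
      have := hsig_split
      rw [hσu_eq] at this
      have hppos : 0 < p := by omega
      have : p * σ₁ (v ^ 2) = p * 1 := by omega
      exact Nat.eq_of_mul_eq_mul_left hppos this
    have hv1 : v = 1 := by
      have hvpos : 0 < v := by
        rcases Nat.eq_zero_or_pos v with h0 | h0
        · exfalso; rw [h0] at huv; simp at huv; omega
        · exact h0
      have hv2 : v ^ 2 ≤ σ₁ (v ^ 2) := self_le_sigma (pow_ne_zero 2 (by omega))
      by_contra hne
      have h2v : 2 ≤ v := by omega
      have hv4 : 2 ^ 2 ≤ v ^ 2 := Nat.pow_le_pow_left h2v 2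
      have hle : v ^ 2 ≤ 1 := by rw [← hσv]; exact hv2
      omega
    have hmq : m = q ^ e := by rw [← huv, hv1, mul_one]
    -- now σ(q^(2e)) = p and p + 1 = 2 q^(2e)
    have hm2q : m ^ 2 = q ^ (2 * e) := by rw [hmq, ← pow_mul]; ring_nf
    obtain ⟨c, hc⟩ := sigma_prime_pow_one_add hqp (2 * e)
    have hpc : p = 1 + q * c := by rw [← hc, ← hm2q, hsigm]
    have hfin : 2 + q * c = 2 * q ^ (2 * e) := by
      have := hpm
      rw [hm2q] at this
      omega
    have hqd2 : q ∣ 2 := by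
      have hd1 : q ∣ 2 * q ^ (2 * e) := Dvd.dvd.mul_left (dvd_pow_self q (by omega)) 2
      rw [← hfin] at hd1
      have hd2 : q ∣ q * c := dvd_mul_right q c
      have hsub := Nat.dvd_sub hd1 hd2
      have heq2 : 2 + q * c - q * c = 2 := by omega
      rwa [heq2] at hsub
    have hq2 : 2 ≤ q := hqp.two_le
    have hqeq2 : q = 2 := by
      have := Nat.le_of_dvd (by omega) hqd2
      omega
    -- but q ∣ m and m is odd
    rcases hqdvd with ⟨r, hr⟩
    rw [hqeq2] at hr
    omega
  · -- h ≥ 3 case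
    have hh3 : 3 ≤ h := by omega
    -- p^(h-1) < B
    have hph : p ^ h = p ^ (h - 1) * p := by
      rw [← pow_succ, Nat.sub_add_cancel (by omega : 1 ≤ h)]
    have hX1 : 1 ≤ p ^ (h - 1) := Nat.one_le_pow _ _ hp1
    have hY5 : p ^ (h - 1) * 5 ≤ p ^ (h - 1) * p := Nat.mul_le_mul_left _ (by omega)
    have hBgt : p ^ (h - 1) < B := by omega
    -- b ≥ h
    have hbge : h ≤ b := by
      have ht2 : t ^ 2 ≤ σ₁ (t ^ 2) := self_le_sigma (pow_ne_zero 2 (by omega))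
      have hlt : p ^ (h - 1) < p ^ b := by
        calc p ^ (h - 1) < B := hBgt
          _ = t ^ 2 := ht
          _ ≤ σ₁ (t ^ 2) := ht2
          _ = p ^ b := hb
      have := (Nat.pow_lt_pow_iff_right (by omega : 1 < p)).mp hlt
      omega
    have hale : a ≤ h - 1 := by omega
    -- contradiction with σ(s²) = p^a < S
    have hSgt : p ^ (h - 1) + 1 ≤ S := by
      rw [hS]
      have hsplit2 : ∑ i ∈ range h, p ^ i
          = ∑ i ∈ range (h - 1), p ^ i + p ^ (h - 1) := by
        have hhe : h - 1 + 1 = h := by omega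
        rw [← Finset.sum_range_succ, hhe]
      have hfirst : 1 ≤ ∑ i ∈ range (h - 1), p ^ i := by
        have h0mem : (0 : ℕ) ∈ range (h - 1) := Finset.mem_range.mpr (by omega)
        calc 1 = p ^ 0 := (pow_zero p).symm
          _ ≤ ∑ i ∈ range (h - 1), p ^ i :=
            Finset.single_le_sum (fun i _ => Nat.zero_le _) h0mem
      omega
    have hσs : s ^ 2 ≤ σ₁ (s ^ 2) := self_le_sigma (pow_ne_zero 2 (by omega))
    have hpa : p ^ a ≤ p ^ (h - 1) := Nat.pow_le_pow_right hp1 hale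
    have : p ^ (h - 1) + 1 ≤ p ^ a := by
      calc p ^ (h - 1) + 1 ≤ S := hSgt
        _ = s ^ 2 := hs
        _ ≤ σ₁ (s ^ 2) := hσs
        _ = p ^ a := ha
    omega

end OPN11

set_option maxHeartbeats 1000000 in
open OPN11 in
theorem stmt_5 (p k m : ℕ) (hp : p.Prime) (hp4 : p % 4 = 1) (hk4 : k % 4 = 1)
    (hcop : Nat.Coprime p m) (hodd : Odd (p ^ k * m ^ 2))
    (hperf : Nat.Perfect (p ^ k * m ^ 2)) :
    (ArithmeticFunction.sigma 1 (p ^ k) : ℚ) / (m ^ 2 : ℚ) + (ArithmeticFunction.sigma 1 (m ^ 2) : ℚ) / (p ^ k : ℚ) ≥ 11 / 3 := by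
  have hp2 : 2 ≤ p := hp.two_le
  have hm2odd : Odd (m ^ 2) := (Nat.odd_mul.mp hodd).2
  have hmodd : Odd m := by
    rcases Nat.even_or_odd m with he | ho
    · exfalso
      have : Even (m ^ 2) := by
        rw [pow_two]
        exact he.mul_left m
      exact (Nat.not_even_iff_odd.mpr hm2odd) this
    · exact ho
  have hm1 : m % 2 = 1 := Nat.odd_iff.mp hmodd
  have hmpos : 0 < m := by omega
  have hpkpos : 0 < p ^ k := Nat.pow_pos (by omega)
  have hm2pos : 0 < m ^ 2 := by positivity
  have hNpos : 0 < p ^ k * m ^ 2 := Nat.mul_pos hpkpos hm2pos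
  -- multiplicativity and perfection
  have hcop2 : Nat.Coprime (p ^ k) (m ^ 2) := Nat.Coprime.pow _ _ hcop
  have hmul : σ₁ (p ^ k) * σ₁ (m ^ 2) = 2 * (p ^ k * m ^ 2) := by
    rw [← sigma_mul hcop2, sigma_eq_sum]
    exact (Nat.perfect_iff_sum_divisors_eq_two_mul hNpos).mp hperf
  -- p^k ∣ σ(m²)
  obtain ⟨c, hc⟩ := sigma_prime_pow_one_add hp k
  have hcopp : Nat.Coprime (p ^ k) (σ₁ (p ^ k)) := by
    apply Nat.Coprime.pow_left
    rw [hc]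
    exact (Nat.coprime_add_mul_left_right p 1 c).mpr (Nat.coprime_one_right p)
  have hdvd : p ^ k ∣ σ₁ (m ^ 2) := by
    apply Nat.Coprime.dvd_of_dvd_mul_left hcopp
    exact ⟨2 * m ^ 2, by rw [mul_comm (σ₁ (p ^ k)) (σ₁ (m ^ 2))] at hmul ⊢; rw [hmul]; ring⟩
  obtain ⟨d, hd⟩ := hdvd
  have hkey : σ₁ (p ^ k) * d = 2 * m ^ 2 := by
    have hx : p ^ k * (σ₁ (p ^ k) * d) = p ^ k * (2 * m ^ 2) := by
      rw [hd] at hmul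
      calc p ^ k * (σ₁ (p ^ k) * d) = σ₁ (p ^ k) * (p ^ k * d) := by ring
        _ = 2 * (p ^ k * m ^ 2) := hmul
        _ = p ^ k * (2 * m ^ 2) := by ring
    exact Nat.eq_of_mul_eq_mul_left hpkpos hx
  -- σ(p^k) ≡ 2 (mod 4)
  have hσ4 : σ₁ (p ^ k) % 4 = 2 := by
    rw [sigma_prime_pow hp]
    have hpz : ((p : ℕ) : ZMod 4) = 1 := by
      have h1 : ((p % 4 : ℕ) : ZMod 4) = ((p : ℕ) : ZMod 4) := ZMod.natCast_mod p 4
      rw [← h1, hp4]; norm_num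
    have hcast := cast_sum_pow_zmod (k + 1) (q := 4) hpz
    have := (ZMod.natCast_eq_natCast_iff' (∑ i ∈ range (k + 1), p ^ i) (k + 1) 4).mp hcast
    omega
  -- d is odd
  have hdodd : d % 2 = 1 := by
    set w : ℕ := σ₁ (p ^ k) / 2 with hw
    have hw2 : σ₁ (p ^ k) = 2 * w := by omega
    have hwodd : w % 2 = 1 := by omega
    have hwd : w * d = m ^ 2 := by
      have hx : 2 * (w * d) = 2 * m ^ 2 := by
        calc 2 * (w * d) = (2 * w) * d := by ring
          _ = σ₁ (p ^ k) * d := by rw [← hw2]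
          _ = 2 * m ^ 2 := hkey
      omega
    have : Odd (w * d) := hwd ▸ hm2odd
    exact Nat.odd_iff.mp (Nat.odd_mul.mp this).2
  -- d ≠ 1 by the key lemma
  have hd1 : d ≠ 1 := by
    intro h1
    apply index_ne_one hp hp4 hk4 hmodd
    · rw [hd, h1, mul_one]
    · have := hkey; rw [h1, mul_one] at this; exact this
  have hd3 : 3 ≤ d := by omega
  -- final arithmetic over ℚ
  have hdQ : (3 : ℚ) ≤ (d : ℚ) := by exact_mod_cast hd3
  have hd0Q : (0 : ℚ) < (d : ℚ) := by linarith
  have hm2Q : (0 : ℚ) < ((m : ℚ) ^ 2) := by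
    have : (0 : ℚ) < (m : ℚ) := by exact_mod_cast hmpos
    positivity
  have hpkQ : (0 : ℚ) < ((p : ℚ) ^ k) := by
    have : (0 : ℚ) < (p : ℚ) := by exact_mod_cast (by omega : 0 < p)
    positivity
  have c1 : (σ₁ (p ^ k) : ℚ) * (d : ℚ) = 2 * (m : ℚ) ^ 2 := by exact_mod_cast hkey
  have c2 : (σ₁ (m ^ 2) : ℚ) = (p : ℚ) ^ k * (d : ℚ) := by exact_mod_cast hd
  have e1 : (σ₁ (p ^ k) : ℚ) / ((m : ℚ) ^ 2) = 2 / (d : ℚ) := by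
    rw [div_eq_div_iff hm2Q.ne' hd0Q.ne']
    linarith [c1]
  have e2 : (σ₁ (m ^ 2) : ℚ) / ((p : ℚ) ^ k) = (d : ℚ) := by
    rw [c2]
    field_simp
  have goal_eq : (ArithmeticFunction.sigma 1 (p ^ k) : ℚ) / (m ^ 2 : ℚ)
      + (ArithmeticFunction.sigma 1 (m ^ 2) : ℚ) / (p ^ k : ℚ)
      = 2 / (d : ℚ) + (d : ℚ) := by
    push_cast at e1 e2 ⊢
    rw [e1, e2]
  rw [goal_eq, ge_iff_le, ← sub_nonneg]
  have heq : 2 / (d : ℚ) + (d : ℚ) - 11 / 3 = (3 * d - 2) * (d - 3) / (3 * d) := by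
    field_simp
    ring
  rw [heq]
  apply div_nonneg
  · nlinarith
  · linarith
end

section
/- Let N = p^k · m^2 be an odd perfect number, where p is a prime with p ≡ k ≡ 1 (mod 4) and gcd(p, m) = 1. Then σ(p^k)/p^k < σ(m)/m. -/
open Finset ArithmeticFunction

-- σ(m²) ≤ σ(m)²
lemma sigma_sq_le (m : ℕ) (hm : m ≠ 0) :
    ArithmeticFunction.sigma 1 (m ^ 2) ≤ (ArithmeticFunction.sigma 1 m) ^ 2 := by
  rw [sigma_one_apply, sigma_one_apply]
  have hprod : (∑ d ∈ m.divisors, d) ^ 2 = ∑ x ∈ m.divisors ×ˢ m.divisors, x.1 * x.2 := by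
    rw [sq, Finset.sum_mul_sum, Finset.sum_product]
  rw [hprod]
  set i : ℕ → ℕ × ℕ := fun d => (Nat.gcd d m, d / Nat.gcd d m) with hi
  have hkey : ∀ d ∈ (m ^ 2).divisors, i d ∈ m.divisors ×ˢ m.divisors ∧ (i d).1 * (i d).2 = d := by
    intro d hd
    obtain ⟨hdvd, hm2⟩ := Nat.mem_divisors.mp hd
    have hd0 : d ≠ 0 := fun h => hm2 (by simpa [h] using hdvd)
    have hg0 : 0 < Nat.gcd d m := Nat.gcd_pos_of_pos_left _ (Nat.pos_of_ne_zero hd0)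
    have hgd : Nat.gcd d m ∣ d := Nat.gcd_dvd_left d m
    have hgm : Nat.gcd d m ∣ m := Nat.gcd_dvd_right d m
    have hmul : Nat.gcd d m * (d / Nat.gcd d m) = d := Nat.mul_div_cancel' hgd
    have hdvd2 : d / Nat.gcd d m ∣ m := by
      obtain ⟨e, he⟩ := hdvd
      have h1 : d / Nat.gcd d m ∣ (m / Nat.gcd d m) * m := by
        refine ⟨e, Nat.eq_of_mul_eq_mul_right hg0 ?_⟩
        rw [mul_right_comm, Nat.div_mul_cancel hgm, mul_right_comm,
          Nat.div_mul_cancel hgd, ← sq, he]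
      exact (Nat.Coprime.dvd_of_dvd_mul_left
        (Nat.coprime_div_gcd_div_gcd hg0) h1)
    refine ⟨Finset.mem_product.mpr ⟨Nat.mem_divisors.mpr ⟨hgm, hm⟩,
      Nat.mem_divisors.mpr ⟨hdvd2, hm⟩⟩, hmul⟩
  calc ∑ d ∈ (m ^ 2).divisors, d
      = ∑ x ∈ (m ^ 2).divisors.image i, x.1 * x.2 := by
        rw [Finset.sum_image]
        · exact Finset.sum_congr rfl fun d hd => ((hkey d hd).2).symm
        · intro a ha b hb hab
          have := (hkey a ha).2
          have := (hkey b hb).2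
          rw [hab] at *
          omega
    _ ≤ ∑ x ∈ m.divisors ×ˢ m.divisors, x.1 * x.2 := by
        apply Finset.sum_le_sum_of_subset
        intro x hx
        obtain ⟨d, hd, rfl⟩ := Finset.mem_image.mp hx
        exact (hkey d hd).1

lemma four_geom_lt (p : ℕ) (hp5 : 5 ≤ p) (k : ℕ) :
    4 * ∑ i ∈ Finset.range (k + 1), p ^ i < 5 * p ^ k := by
  induction k with
  | zero => simp
  | succ n ih =>
    rw [Finset.sum_range_succ, Nat.mul_add]
    have h1 : 5 * p ^ n ≤ p * p ^ n := Nat.mul_le_mul_right _ hp5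
    have h2 : p ^ (n + 1) = p * p ^ n := by rw [pow_succ, mul_comm]
    omega

set_option maxHeartbeats 1000000 in
theorem stmt_6 (p k m : ℕ) (hp : p.Prime) (hp4 : p % 4 = 1) (hk4 : k % 4 = 1)
    (hcop : Nat.Coprime p m) (hodd : Odd (p ^ k * m ^ 2))
    (hperf : Nat.Perfect (p ^ k * m ^ 2)) :
    (ArithmeticFunction.sigma 1 (p ^ k) : ℚ) / (p ^ k : ℚ) < (ArithmeticFunction.sigma 1 m : ℚ) / (m : ℚ) := by
  have hp5 : 5 ≤ p := by have := hp.two_le; omega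
  have hppos : 0 < p ^ k := pow_pos (by omega) k
  have hm0 : m ≠ 0 := by
    rintro rfl
    simp at hodd
  have hmpos : 0 < m := Nat.pos_of_ne_zero hm0
  have hNpos : 0 < p ^ k * m ^ 2 := Nat.mul_pos hppos (by positivity)
  -- σ(N) = 2N
  have hσ : ArithmeticFunction.sigma 1 (p ^ k * m ^ 2) = 2 * (p ^ k * m ^ 2) := by
    rw [sigma_one_apply]
    exact (Nat.perfect_iff_sum_divisors_eq_two_mul hNpos).mp hperf
  have hcop2 : Nat.Coprime (p ^ k) (m ^ 2) := hcop.pow k 2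
  have hmul : ArithmeticFunction.sigma 1 (p ^ k) * ArithmeticFunction.sigma 1 (m ^ 2)
      = 2 * (p ^ k * m ^ 2) := by
    rw [← ArithmeticFunction.isMultiplicative_sigma.map_mul_of_coprime hcop2, hσ]
  -- abundancy bound on Euler factor
  have hA : 4 * ArithmeticFunction.sigma 1 (p ^ k) < 5 * p ^ k := by
    rw [sigma_one_apply_prime_pow hp]
    exact four_geom_lt p hp5 k
  have hB : ArithmeticFunction.sigma 1 (m ^ 2) ≤ (ArithmeticFunction.sigma 1 m) ^ 2 :=
    sigma_sq_le m hm0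
  have hbge : m ^ 2 ≤ ArithmeticFunction.sigma 1 (m ^ 2) := by
    rw [sigma_one_apply]
    exact Finset.single_le_sum (fun i _ => Nat.zero_le i)
      (Nat.mem_divisors_self _ (by positivity))
  have hage : p ^ k ≤ ArithmeticFunction.sigma 1 (p ^ k) := by
    rw [sigma_one_apply]
    exact Finset.single_le_sum (fun i _ => Nat.zero_le i)
      (Nat.mem_divisors_self _ (by positivity))
  -- move to ℚ
  set a : ℚ := (ArithmeticFunction.sigma 1 (p ^ k) : ℚ) with ha
  set b : ℚ := (ArithmeticFunction.sigma 1 (m ^ 2) : ℚ) with hb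
  set c : ℚ := (ArithmeticFunction.sigma 1 m : ℚ) with hc
  set P : ℚ := ((p : ℚ)) ^ k with hP
  set M : ℚ := (m : ℚ) with hM
  have hPpos : (0:ℚ) < P := by
    show (0:ℚ) < (p : ℚ) ^ k
    have : (0:ℚ) < (p:ℚ) := by exact_mod_cast hp.pos
    positivity
  have hMpos : (0:ℚ) < M := by
    show (0:ℚ) < (m : ℚ)
    exact_mod_cast hmpos
  have he1 : a * b = 2 * (P * M ^ 2) := by
    show ((ArithmeticFunction.sigma 1 (p ^ k) : ℕ) : ℚ) * ((ArithmeticFunction.sigma 1 (m ^ 2) : ℕ) : ℚ)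
      = 2 * ((p:ℚ) ^ k * (m:ℚ) ^ 2)
    rw [← Nat.cast_mul, hmul]
    push_cast
    ring
  have he2 : 4 * a < 5 * P := by
    show (4:ℚ) * ((ArithmeticFunction.sigma 1 (p ^ k) : ℕ) : ℚ) < 5 * (p:ℚ) ^ k
    exact_mod_cast hA
  have he3 : b ≤ c ^ 2 := by
    show ((ArithmeticFunction.sigma 1 (m ^ 2) : ℕ) : ℚ) ≤ ((ArithmeticFunction.sigma 1 m : ℕ) : ℚ) ^ 2
    exact_mod_cast hB
  have he4 : M ^ 2 ≤ b := by
    show ((m:ℚ)) ^ 2 ≤ ((ArithmeticFunction.sigma 1 (m ^ 2) : ℕ) : ℚ)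
    exact_mod_cast hbge
  have he5 : P ≤ a := by
    show ((p:ℚ)) ^ k ≤ ((ArithmeticFunction.sigma 1 (p ^ k) : ℕ) : ℚ)
    exact_mod_cast hage
  have hbpos : (0:ℚ) < b := lt_of_lt_of_le (by positivity) he4
  have hcpos : (0:ℚ) < c := by
    have := lt_of_lt_of_le hbpos he3
    nlinarith [sq_nonneg c]
  have hapos : (0:ℚ) < a := lt_of_lt_of_le hPpos he5
  rw [div_lt_div_iff₀ hPpos hMpos]
  -- key chain of squares
  have h8 : 8 * M ^ 2 < 5 * b := by
    have h := mul_pos hbpos (show (0:ℚ) < 5 * P - 4 * a by linarith)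
    nlinarith [hPpos]
  have h5 : 8 * M ^ 2 < 5 * c ^ 2 := lt_of_lt_of_le h8 (by nlinarith)
  have k1 : 16 * (a * M) ^ 2 < 25 * (P * M) ^ 2 := by
    nlinarith [mul_pos hMpos hMpos,
      mul_pos (show (0:ℚ) < 5 * P - 4 * a by linarith)
        (show (0:ℚ) < 5 * P + 4 * a by linarith)]
  have k2 : 25 * (P * M) ^ 2 < 16 * (c * P) ^ 2 := by
    nlinarith [mul_pos hPpos hPpos, mul_pos hMpos hMpos]
  have k3 : (a * M) ^ 2 < (c * P) ^ 2 := by linarith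
  nlinarith [k3, mul_pos hcpos hPpos, mul_pos hapos hMpos]
end

section
/- Let N = p^k · m^2 be an odd perfect number, where p is a prime with p ≡ k ≡ 1 (mod 4) and gcd(p, m) = 1. Then σ(p^k)/m ≠ σ(m)/p^k, i.e., p^k · σ(p^k) ≠ m · σ(m). -/
open ArithmeticFunction Finset
open scoped ArithmeticFunction.sigma

private lemma aux_sigma_mul (d c : ℕ) (hd : 0 < d) (hc : 2 ≤ c) :
    1 + c * σ 1 d ≤ σ 1 (d * c) := by
  have hdc : 0 < d * c := Nat.mul_pos hd (by omega)
  rw [sigma_one_apply, sigma_one_apply]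
  have hsub : insert 1 (d.divisors.image (· * c)) ⊆ (d * c).divisors := by
    intro x hx
    rcases Finset.mem_insert.mp hx with rfl | hx
    · exact Nat.one_mem_divisors.mpr hdc.ne'
    · obtain ⟨e, he, rfl⟩ := Finset.mem_image.mp hx
      rw [Nat.mem_divisors] at he ⊢
      exact ⟨Nat.mul_dvd_mul he.1 dvd_rfl, hdc.ne'⟩
  have h1 : 1 ∉ d.divisors.image (· * c) := by
    simp only [Finset.mem_image, not_exists]
    rintro e ⟨he, hec⟩
    have : 1 ≤ e := Nat.pos_of_mem_divisors he
    nlinarith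
  have heq : 1 + c * ∑ x ∈ d.divisors, x = ∑ x ∈ insert 1 (d.divisors.image (· * c)), x := by
    rw [Finset.sum_insert h1,
      Finset.sum_image (fun a _ b _ h => Nat.eq_of_mul_eq_mul_right (by omega) h),
      ← Finset.sum_mul, mul_comm]
  rw [heq]
  exact Finset.sum_le_sum_of_subset hsub

private lemma aux_le_sigma (n : ℕ) (hn : 0 < n) : n ≤ σ 1 n := by
  rw [sigma_one_apply]
  exact Finset.single_le_sum (fun i _ => Nat.zero_le i)
    (Nat.mem_divisors.mpr ⟨dvd_rfl, hn.ne'⟩)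

theorem stmt_7 (p k m : ℕ) (hp : p.Prime) (hp4 : p % 4 = 1) (hk4 : k % 4 = 1)
    (hcop : Nat.Coprime p m) (hodd : Odd (p ^ k * m ^ 2))
    (hperf : Nat.Perfect (p ^ k * m ^ 2)) :
    (ArithmeticFunction.sigma 1 (p ^ k) : ℚ) / (m : ℚ) ≠ (ArithmeticFunction.sigma 1 m : ℚ) / (p ^ k : ℚ) := by
  have hp5 : 5 ≤ p := by have := hp.two_le; omega
  have hk1 : 1 ≤ k := by omega
  have hN : 0 < p ^ k * m ^ 2 := hperf.2
  have hm : 0 < m := by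
    rcases Nat.eq_zero_or_pos m with rfl | h
    · simp at hN
    · exact h
  have hpk5 : 5 ≤ p ^ k := by
    calc 5 ≤ p := hp5
    _ = p ^ 1 := (pow_one p).symm
    _ ≤ p ^ k := Nat.pow_le_pow_right (by omega) hk1
  have hpk : 0 < p ^ k := by omega
  -- perfect number equation
  have hσN : σ 1 (p ^ k * m ^ 2) = 2 * (p ^ k * m ^ 2) := by
    rw [sigma_one_apply]
    exact (Nat.perfect_iff_sum_divisors_eq_two_mul hN).mp hperf
  intro heq
  -- cross-multiply
  have hm0 : (m : ℚ) ≠ 0 := by exact_mod_cast hm.ne'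
  have hq0 : ((p ^ k : ℕ) : ℚ) ≠ 0 := by exact_mod_cast hpk.ne'
  have hcross : σ 1 (p ^ k) * p ^ k = σ 1 m * m := by
    field_simp at heq
    rw [mul_comm (σ 1 m)]
    exact_mod_cast heq
  -- p^k divides σ 1 m
  have hdvd : p ^ k ∣ σ 1 m := by
    refine (hcop.pow_left k).dvd_of_dvd_mul_right ⟨σ 1 (p ^ k), ?_⟩
    rw [← hcross]; ring
  obtain ⟨t, ht⟩ := hdvd
  have hσpk : σ 1 (p ^ k) = m * t := by
    refine Nat.eq_of_mul_eq_mul_left hpk ?_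
    have : σ 1 (p ^ k) * p ^ k = p ^ k * (m * t) := by rw [hcross, ht]; ring
    linarith
  -- lower bound on σ(p^k)
  have hlb : p ^ k + 1 ≤ σ 1 (p ^ k) := by
    have h := aux_sigma_mul 1 (p ^ k) one_pos (by omega)
    simpa [sigma_one_apply, Nat.divisors_one, add_comm] using h
  -- upper bound on σ(p^k)
  have hub : σ 1 (p ^ k) < 2 * p ^ k := by
    rw [sigma_one_apply_prime_pow hp, Finset.sum_range_succ]
    have : ∑ i ∈ Finset.range k, p ^ i < p ^ k :=
      Nat.geomSum_lt (by omega) (fun j hj => Finset.mem_range.mp hj)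
    omega
  -- m is deficient (proper divisor of a perfect number)
  have hdef : σ 1 m < 2 * m := by
    have h := aux_sigma_mul m (p ^ k * m) hm (by nlinarith)
    have h2 : m * (p ^ k * m) = p ^ k * m ^ 2 := by ring
    rw [h2, hσN] at h
    nlinarith
  -- σ(m) ≥ m
  have hml : m ≤ σ 1 m := aux_le_sigma m hm
  -- case analysis on t
  rcases Nat.lt_or_ge t 2 with hlt | hge
  · interval_cases t
    · omega
    · -- t = 1 : σ(p^k) = m, σ(m) = p^k
      simp only [mul_one] at hσpk ht
      omega
  · -- t ≥ 2
    nlinarith [ht, hσpk, hub, hdef, sq_nonneg (t - 2)]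
end

section
/- Let N = p^k · m^2 be an odd perfect number, where p is a prime with p ≡ k ≡ 1 (mod 4) and gcd(p, m) = 1. If m < σ(p^k) and σ(p^k)/m < σ(m)/p^k, then (4/5) · m < p^k < √2 · m. -/
open ArithmeticFunction Finset

lemma mygeom_lt {p : ℕ} (hp5 : 5 ≤ p) (k : ℕ) :
    4 * ∑ i ∈ range (k + 1), p ^ i < 5 * p ^ k := by
  induction k with
  | zero => simp
  | succ n ih =>
    rw [Finset.sum_range_succ]
    have h1 : 5 * p ^ n ≤ p ^ (n + 1) := by
      rw [pow_succ]; calc 5 * p ^ n = p ^ n * 5 := by ring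
        _ ≤ p ^ n * p := by exact Nat.mul_le_mul_left _ hp5
    calc 4 * (∑ i ∈ range (n + 1), p ^ i + p ^ (n + 1))
        = 4 * ∑ i ∈ range (n + 1), p ^ i + 4 * p ^ (n + 1) := by ring
      _ < 5 * p ^ n + 4 * p ^ (n + 1) := by omega
      _ ≤ p ^ (n + 1) + 4 * p ^ (n + 1) := by omega
      _ = 5 * p ^ (n + 1) := by ring

lemma sigma_sq_ge (m : ℕ) (hm : 0 < m) :
    m * ArithmeticFunction.sigma 1 m ≤ ArithmeticFunction.sigma 1 (m ^ 2) := by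
  rw [sigma_one_apply, sigma_one_apply, Finset.mul_sum]
  have hinj : ∀ a ∈ m.divisors, ∀ b ∈ m.divisors, m * a = m * b → a = b :=
    fun a _ b _ h => Nat.eq_of_mul_eq_mul_left hm h
  rw [show (∑ i ∈ m.divisors, m * i) = ∑ d ∈ m.divisors.image (fun d => m * d), d from
    (Finset.sum_image (g := fun d => m * d) (f := fun d => d) hinj).symm]
  apply Finset.sum_le_sum_of_subset
  intro x hx
  simp only [Finset.mem_image] at hx
  obtain ⟨d, hd, rfl⟩ := hx
  rw [Nat.mem_divisors] at hd ⊢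
  exact ⟨by rw [sq]; exact mul_dvd_mul dvd_rfl hd.1, by positivity⟩

theorem stmt_10 (p k m : ℕ) (hp : p.Prime) (hp4 : p % 4 = 1) (hk4 : k % 4 = 1)
    (hcop : Nat.Coprime p m) (hodd : Odd (p ^ k * m ^ 2))
    (hperf : Nat.Perfect (p ^ k * m ^ 2)) (h1 : m < ArithmeticFunction.sigma 1 (p ^ k))
    (h2 : (ArithmeticFunction.sigma 1 (p ^ k) : ℝ) / (m : ℝ) < (ArithmeticFunction.sigma 1 m : ℝ) / (p ^ k : ℝ)) :
    (4 / 5 : ℝ) * (m : ℝ) < (p ^ k : ℝ) ∧ (p ^ k : ℝ) < Real.sqrt 2 * (m : ℝ) := by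
  have hp2 := hp.two_le
  have hp5 : 5 ≤ p := by omega
  have hk1 : 1 ≤ k := by omega
  have hm : 0 < m := by
    rcases Nat.eq_zero_or_pos m with rfl | h
    · simp [Nat.odd_iff] at hodd
    · exact h
  have hpk : 0 < p ^ k := Nat.pow_pos (by omega)
  -- sigma of prime power formula
  have hσpk : ArithmeticFunction.sigma 1 (p ^ k) = ∑ i ∈ range (k + 1), p ^ i :=
    sigma_one_apply_prime_pow hp
  -- bound: 4 σ(p^k) < 5 p^k
  have hub : 4 * ArithmeticFunction.sigma 1 (p ^ k) < 5 * p ^ k := by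
    rw [hσpk]; exact mygeom_lt hp5 k
  -- bound: p^k < σ(p^k)
  have hlb : p ^ k + 1 ≤ ArithmeticFunction.sigma 1 (p ^ k) := by
    rw [hσpk]
    rw [Finset.sum_range_succ]
    have : 1 ≤ ∑ i ∈ range k, p ^ i := by
      calc 1 = ∑ i ∈ range 1, p ^ i := by simp
        _ ≤ _ := Finset.sum_le_sum_of_subset (by simp [Finset.range_subset]; omega)
    omega
  -- perfection
  have hNpos : 0 < p ^ k * m ^ 2 := by positivity
  have hperf' : ArithmeticFunction.sigma 1 (p ^ k) * ArithmeticFunction.sigma 1 (m ^ 2)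
      = 2 * (p ^ k * m ^ 2) := by
    rw [← isMultiplicative_sigma.map_mul_of_coprime ((hcop.pow_left k).pow_right 2),
      sigma_one_apply]
    exact (Nat.perfect_iff_sum_divisors_eq_two_mul hNpos).mp hperf
  -- σ(m²) < 2 m²
  have hsm2 : ArithmeticFunction.sigma 1 (m ^ 2) < 2 * m ^ 2 := by
    by_contra hcon
    push_neg at hcon
    have := calc (p ^ k + 1) * (2 * m ^ 2)
        ≤ ArithmeticFunction.sigma 1 (p ^ k) * ArithmeticFunction.sigma 1 (m ^ 2) :=
          Nat.mul_le_mul hlb hcon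
      _ = 2 * (p ^ k * m ^ 2) := hperf'
    nlinarith [sq_nonneg m, hm]
  -- σ(m) < 2 m
  have hσm : ArithmeticFunction.sigma 1 m < 2 * m := by
    have h3 := sigma_sq_ge m hm
    have : m * ArithmeticFunction.sigma 1 m < m * (2 * m) := by
      calc m * ArithmeticFunction.sigma 1 m ≤ _ := h3
        _ < 2 * m ^ 2 := hsm2
        _ = m * (2 * m) := by ring
    exact lt_of_mul_lt_mul_left this (Nat.zero_le m)
  -- real versions
  have hmR : (0:ℝ) < m := by exact_mod_cast hm
  have hpkR : (0:ℝ) < (p:ℝ) ^ k := by positivity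
  have h2' : ((p:ℝ) ^ k) * (ArithmeticFunction.sigma 1 (p ^ k) : ℝ)
      < (m : ℝ) * (ArithmeticFunction.sigma 1 m : ℝ) := by
    rw [div_lt_div_iff₀ hmR (by push_cast at hpkR ⊢; exact hpkR)] at h2
    push_cast at h2 ⊢
    nlinarith
  have hσmR : (ArithmeticFunction.sigma 1 m : ℝ) < 2 * m := by exact_mod_cast hσm
  have hlbR : (p:ℝ) ^ k < (ArithmeticFunction.sigma 1 (p ^ k) : ℝ) := by
    have : ((p ^ k : ℕ) : ℝ) < (ArithmeticFunction.sigma 1 (p ^ k) : ℝ) := by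
      exact_mod_cast Nat.lt_of_lt_of_le (Nat.lt_succ_self _) hlb
    push_cast at this; exact this
  have hsq : ((p:ℝ) ^ k) ^ 2 < 2 * (m:ℝ) ^ 2 := by nlinarith
  constructor
  · have : (4 : ℝ) * m < 5 * (p:ℝ) ^ k := by
      have hubR : (4 * ArithmeticFunction.sigma 1 (p ^ k) : ℝ) < 5 * ((p:ℝ)^k) := by
        exact_mod_cast hub
      have h1R : (m : ℝ) < (ArithmeticFunction.sigma 1 (p ^ k) : ℝ) := by exact_mod_cast h1
      linarith
    linarith
  · have : (p:ℝ) ^ k < Real.sqrt (2 * (m:ℝ) ^ 2) := by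
      rw [show ((p:ℝ)^k) = ((p:ℝ)^k) from rfl]
      exact (Real.lt_sqrt (by positivity)).mpr hsq
    calc (p:ℝ) ^ k < Real.sqrt (2 * (m:ℝ)^2) := this
      _ = Real.sqrt 2 * m := by
        rw [Real.sqrt_mul (by norm_num), Real.sqrt_sq hmR.le]
end

section
/- Let N = p^k · m^2 be an odd perfect number, where p is a prime with p ≡ k ≡ 1 (mod 4) and gcd(p, m) = 1. Then p^k < (2/3) · m^2. -/
open Finset ArithmeticFunction
open scoped ArithmeticFunction.sigma

private lemma geom_mul (p n : ℕ) (hp : 1 ≤ p) :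
    (∑ i ∈ range (n + 1), p ^ i) * (p - 1) = p ^ (n + 1) - 1 := by
  have h1 : (1:ℕ) ≤ p ^ (n+1) := Nat.one_le_pow _ _ hp
  have := geom_sum_mul (x := (p : ℤ)) (n + 1)
  zify [hp, h1]
  linarith

private lemma ord_dvd_iff (q p n : ℕ) (hq : q.Prime) (hqp : ¬ q ∣ p) :
    q ∣ p ^ n - 1 ↔ orderOf (p : ZMod q) ∣ n := by
  haveI := Fact.mk hq
  have hp0 : p ≠ 0 := by rintro rfl; exact hqp (dvd_zero q)
  have h1 : (1:ℕ) ≤ p ^ n := Nat.one_le_pow _ _ (Nat.pos_of_ne_zero hp0)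
  rw [orderOf_dvd_iff_pow_eq_one, ← ZMod.natCast_eq_zero_iff]
  rw [Nat.cast_sub h1]
  push_cast
  rw [sub_eq_zero]

-- the per-prime core
private lemma core_lemma (p k m q a : ℕ) (hp : p.Prime) (hq : q.Prime) (hp5 : 5 ≤ p)
    (hk1 : 1 ≤ k) (hm0 : m ≠ 0) (hmodd : Odd m) (hcop : Nat.Coprime p m)
    (hqm : q ∣ m) (ha : a = m.factorization q)
    (hA : σ 1 (m ^ 2) = p ^ k) (hB : σ 1 (p ^ k) = 2 * m ^ 2) :
    q ^ a ∣ k + 1 := by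
  have hk10 : k + 1 ≠ 0 := by omega
  have hσpk : σ 1 (p ^ k) = ∑ i ∈ range (k + 1), p ^ i := sigma_one_apply_prime_pow hp
  have hgeom : σ 1 (p ^ k) * (p - 1) = p ^ (k+1) - 1 := by
    rw [hσpk]; exact geom_mul p k (by omega)
  have hσ0 : σ 1 (p ^ k) ≠ 0 := by rw [hB]; positivity
  have hp10 : p - 1 ≠ 0 := by omega
  have hσdvd : σ 1 (p ^ k) ∣ p ^ (k+1) - 1 := ⟨p - 1, hgeom.symm⟩
  have hfac : (p ^ (k+1) - 1).factorization q
      = (σ 1 (p ^ k)).factorization q + (p - 1).factorization q := by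
    rw [← hgeom, Nat.factorization_mul hσ0 hp10]; simp
  have ha1 : 1 ≤ a := ha ▸ hq.factorization_pos_of_dvd hm0 hqm
  have hq2 : 2 ≤ q := hq.two_le
  have hqodd : Odd q := by
    refine hq.odd_of_ne_two ?_
    rintro rfl
    obtain ⟨c, rfl⟩ := hqm
    rw [Nat.odd_iff] at hmodd
    omega
  have hqp : q ≠ p := by
    rintro rfl
    have h1 : q ∣ 1 := hcop ▸ Nat.dvd_gcd dvd_rfl hqm
    have := Nat.le_of_dvd one_pos h1
    omega
  have hqdvdp : ¬ q ∣ p := fun h => hqp ((Nat.prime_dvd_prime_iff_eq hq hp).mp h)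
  -- decomposition of m
  set c := m / q ^ a with hcdef
  have hmc : q ^ a * c = m := by rw [ha, hcdef, ha]; exact Nat.ordProj_mul_ordCompl_eq_self m q
  have hcnd : ¬ q ∣ c := by rw [hcdef, ha]; exact Nat.not_dvd_ordCompl hq hm0
  have hm2 : m ^ 2 = q ^ (2*a) * c ^ 2 := by rw [← hmc]; ring
  have hcop2 : (q ^ (2*a)).Coprime (c ^ 2) := Nat.Coprime.pow _ _ ((hq.coprime_iff_not_dvd).mpr hcnd)
  have hmul : σ 1 (m ^ 2) = σ 1 (q ^ (2*a)) * σ 1 (c ^ 2) := by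
    rw [hm2, isMultiplicative_sigma.map_mul_of_coprime hcop2]
  have hsdvd : σ 1 (q ^ (2*a)) ∣ p ^ k := by rw [← hA, hmul]; exact dvd_mul_right _ _
  obtain ⟨b, hbk, hb⟩ := (Nat.dvd_prime_pow hp).mp hsdvd
  -- σ(q^{2a}) = S * q + 1
  set S := ∑ i ∈ range (2*a), q ^ i with hSdef
  have hσq : σ 1 (q ^ (2*a)) = S * q + 1 := by
    rw [sigma_one_apply_prime_pow hq, Finset.sum_range_succ']
    simp [pow_succ, ← Finset.sum_mul, hSdef]
  have hS1 : 1 ≤ S := by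
    rw [hSdef]
    calc (1:ℕ) = q ^ 0 := by norm_num
    _ ≤ ∑ i ∈ range (2*a), q ^ i :=
      Finset.single_le_sum (f := fun i => q ^ i) (fun i _ => Nat.zero_le _)
        (Finset.mem_range.mpr (by omega))
  have hSq : ¬ q ∣ S := by
    have h2a : 2*a = (2*a - 1) + 1 := by omega
    have : S = (∑ i ∈ range (2*a - 1), q ^ (i+1)) + 1 := by
      rw [hSdef, h2a, Finset.sum_range_succ']; norm_num
    intro hdvd
    have hd2 : q ∣ (∑ i ∈ range (2*a - 1), q ^ (i+1)) := by
      apply Finset.dvd_sum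
      intro i _
      exact dvd_pow_self q (by omega)
    have h3 : q ∣ S - (∑ i ∈ range (2*a - 1), q ^ (i+1)) := Nat.dvd_sub hdvd hd2
    have h4 : S - (∑ i ∈ range (2*a - 1), q ^ (i+1)) = 1 := by omega
    rw [h4] at h3
    exact absurd (Nat.le_of_dvd one_pos h3) (by omega)

  have hb_eq : p ^ b = S * q + 1 := by rw [← hb, hσq]
  have hb1 : 1 ≤ b := by
    rcases Nat.eq_zero_or_pos b with h | h
    · rw [h, pow_zero] at hb_eq; nlinarith
    · exact h
  have hpb1 : p ^ b - 1 = S * q := by omega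
  have hpb1_0 : p ^ b - 1 ≠ 0 := by
    rw [hpb1]; exact Nat.mul_ne_zero (by omega) (by omega)
  have hqdvd_pb : q ∣ p ^ b - 1 := by rw [hpb1]; exact dvd_mul_left q S
  have hvpb : (p ^ b - 1).factorization q = 1 := by
    rw [hpb1, Nat.factorization_mul (by omega) (by omega)]
    simp [Nat.factorization_eq_zero_of_not_dvd hSq, hq.factorization_self]
  have hq2aσ : q ^ (2*a) ∣ σ 1 (p ^ k) := by
    rw [hB, hm2]; exact ⟨2 * c ^ 2, by ring⟩
  have hvσ : 2*a ≤ (σ 1 (p ^ k)).factorization q :=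
    (hq.pow_dvd_iff_le_factorization hσ0).mp hq2aσ
  haveI := Fact.mk hq
  by_cases hcase : q ∣ p - 1
  · have hLTE : padicValNat q (p ^ (k+1) - 1 ^ (k+1))
        = padicValNat q (p - 1) + padicValNat q (k+1) :=
      padicValNat.pow_sub_pow hqodd (by omega : 1 < p) (by simpa using hcase) hqdvdp hk10
    rw [one_pow] at hLTE
    have e1 : (p^(k+1) - 1).factorization q = (p-1).factorization q + (k+1).factorization q := by
      rw [Nat.factorization_def _ hq, Nat.factorization_def _ hq, Nat.factorization_def _ hq]
      exact hLTE
    exact (hq.pow_dvd_iff_le_factorization hk10).mpr (by omega)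
  · have hvp1 : (p - 1).factorization q = 0 := Nat.factorization_eq_zero_of_not_dvd hcase
    set e := orderOf (p : ZMod q) with hedef
    have he_b : e ∣ b := (ord_dvd_iff q p b hq hqdvdp).mp hqdvd_pb
    have hq_pk1 : q ∣ p ^ (k+1) - 1 :=
      dvd_trans (dvd_trans (dvd_pow_self q (by omega : 2*a ≠ 0)) hq2aσ) hσdvd
    have he_k1 : e ∣ k + 1 := (ord_dvd_iff q p (k+1) hq hqdvdp).mp hq_pk1
    have he0 : e ≠ 0 := by rintro h; rw [h] at he_k1; exact hk10 (Nat.eq_zero_of_zero_dvd he_k1)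
    obtain ⟨n', hn'⟩ := he_k1
    have hn'0 : n' ≠ 0 := by rintro rfl; simp at hn'
    set x := p ^ e with hxdef
    have hx1 : 1 < x := Nat.one_lt_pow he0 (by omega)
    have hqx : ¬ q ∣ x := fun h => hqdvdp (hq.dvd_of_dvd_pow h)
    have hqx1 : q ∣ x - 1 := (ord_dvd_iff q p e hq hqdvdp).mpr dvd_rfl
    have hx1_0 : x - 1 ≠ 0 := by omega
    have hdvd_b : x - 1 ∣ p ^ b - 1 := by
      have h := Nat.sub_dvd_pow_sub_pow x 1 (b / e)
      rw [one_pow, hxdef, ← pow_mul, Nat.mul_div_cancel' he_b] at h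
      exact h
    have hvx_le : (x - 1).factorization q ≤ (p ^ b - 1).factorization q :=
      Finsupp.le_def.mp ((Nat.factorization_le_iff_dvd hx1_0 hpb1_0).mpr hdvd_b) q
    have hvx1 : (x - 1).factorization q = 1 := by
      have hge : 1 ≤ (x - 1).factorization q :=
        (hq.pow_dvd_iff_le_factorization hx1_0).mp (by simpa using hqx1)
      omega
    have hLTE : padicValNat q (x ^ n' - 1 ^ n') = padicValNat q (x - 1) + padicValNat q n' :=
      padicValNat.pow_sub_pow hqodd hx1 (by simpa using hqx1) hqx hn'0
    have hxn : x ^ n' = p ^ (k+1) := by rw [hxdef, ← pow_mul, ← hn']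
    rw [one_pow, hxn] at hLTE
    have e2 : (p^(k+1) - 1).factorization q = 1 + n'.factorization q := by
      rw [Nat.factorization_def _ hq, hLTE, ← Nat.factorization_def _ hq, hvx1, ← Nat.factorization_def _ hq]
    have hva : a ≤ n'.factorization q := by omega
    have h1 : q ^ a ∣ n' := (hq.pow_dvd_iff_le_factorization hn'0).mpr hva
    exact dvd_trans h1 ⟨e, by rw [hn']; ring⟩

private lemma pow5 (k : ℕ) (hk : 2 ≤ k) : 2 * (k + 1) ^ 2 < 5 ^ k := by
  induction k with
  | zero => omega
  | succ n ih =>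
    rcases Nat.lt_or_ge n 2 with h | h
    · interval_cases n <;> simp_all
    · have h1 : 5 ^ n ≥ 1 := Nat.one_le_pow _ _ (by norm_num)
      have h3 := ih h
      have h4 : 5 ^ (n+1) = 5 * 5 ^ n := by rw [pow_succ]; ring
      nlinarith

private lemma key_not_one (p k m : ℕ) (hp : p.Prime) (hp5 : 5 ≤ p) (hk1 : 1 ≤ k)
    (hmodd : Odd m) (hcop : Nat.Coprime p m)
    (hA : σ 1 (m ^ 2) = p ^ k) (hB : σ 1 (p ^ k) = 2 * m ^ 2) : False := by
  have hm0 : m ≠ 0 := by rintro rfl; simp [Nat.odd_iff] at hmodd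
  have hk10 : k + 1 ≠ 0 := by omega
  have hmdvd : m ∣ k + 1 := by
    rw [← Nat.factorization_le_iff_dvd hm0 hk10, Finsupp.le_def]
    intro q
    by_cases hq : q.Prime
    swap
    · simp [Nat.factorization_eq_zero_of_not_prime _ hq]
    by_cases hqm : q ∣ m
    swap
    · simp [Nat.factorization_eq_zero_of_not_dvd hqm]
    exact (hq.pow_dvd_iff_le_factorization hk10).mp
      (core_lemma p k m q _ hp hq hp5 hk1 hm0 hmodd hcop hqm rfl hA hB)
  have hmle : m ≤ k + 1 := Nat.le_of_dvd (by omega) hmdvd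
  have h5 : 5 ^ k ≤ p ^ k := Nat.pow_le_pow_left hp5 k
  have hσge : p ^ k + 1 ≤ σ 1 (p ^ k) := by
    rw [sigma_one_apply_prime_pow hp, Finset.sum_range_succ]
    have := Finset.single_le_sum (f := fun i => p ^ i) (fun i _ => Nat.zero_le _)
      (Finset.mem_range.mpr (show 0 < k by omega))
    simp only [pow_zero] at this
    omega
  have h2m : 5 ^ k + 1 ≤ 2 * m ^ 2 := by omega
  have hm2le : 2 * m ^ 2 ≤ 2 * (k+1)^2 := by nlinarith
  have hk2 : k < 2 := by
    by_contra h
    have := pow5 k (by omega)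
    omega
  have hkeq : k = 1 := by omega
  rw [hkeq] at hmdvd
  have hm1 : m = 1 := by
    have h1 := Nat.le_of_dvd (by norm_num) hmdvd
    have h2 := Nat.odd_iff.mp hmodd
    omega
  rw [hm1, hkeq] at hA
  simp [sigma_one_apply] at hA
  omega

theorem stmt_12 (p k m : ℕ) (hp : p.Prime) (hp4 : p % 4 = 1) (hk4 : k % 4 = 1)
    (hcop : Nat.Coprime p m) (hodd : Odd (p ^ k * m ^ 2))
    (hperf : Nat.Perfect (p ^ k * m ^ 2)) :
    (p ^ k : ℚ) < 2 / 3 * (m ^ 2 : ℚ) := by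
  have hp2 := hp.two_le
  have hp5 : 5 ≤ p := by omega
  have hk1 : 1 ≤ k := by omega
  have hmodd : Odd m := by
    have h1 : Odd (m ^ 2) := (Nat.odd_mul.mp hodd).2
    rcases Nat.even_or_odd m with he | ho
    · exfalso
      obtain ⟨c, rfl⟩ := he
      rw [Nat.odd_iff] at h1
      have h2 : (c + c) ^ 2 = 2 * (2 * c ^ 2) := by ring
      omega
    · exact ho
  have hm0 : m ≠ 0 := by rintro rfl; simp [Nat.odd_iff] at hmodd
  have hN0 : 0 < p ^ k * m ^ 2 := by positivity
  have hmain : σ 1 (p ^ k) * σ 1 (m ^ 2) = 2 * (p ^ k * m ^ 2) := by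
    rw [← isMultiplicative_sigma.map_mul_of_coprime (Nat.Coprime.pow _ _ hcop)]
    rw [sigma_one_apply]
    exact (Nat.perfect_iff_sum_divisors_eq_two_mul hN0).mp hperf
  have hσpk : σ 1 (p ^ k) = ∑ i ∈ range (k + 1), p ^ i := sigma_one_apply_prime_pow hp
  have hpodd : p % 2 = 1 := by omega
  have hpns : ¬ p ∣ σ 1 (p ^ k) := by
    rw [hσpk, Finset.sum_range_succ']
    simp only [pow_zero]
    intro hdvd
    have h1 : p ∣ ∑ i ∈ range k, p ^ (i + 1) :=
      Finset.dvd_sum fun i _ => dvd_pow_self p (Nat.succ_ne_zero i)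
    have h2 : p ∣ 1 := (Nat.dvd_add_right h1).mp hdvd
    have := Nat.le_of_dvd one_pos h2
    omega
  have hcop_pσ : (p ^ k).Coprime (σ 1 (p ^ k)) :=
    Nat.Coprime.pow_left k ((hp.coprime_iff_not_dvd).mpr hpns)
  have hdvdσ : p ^ k ∣ σ 1 (m ^ 2) := by
    apply hcop_pσ.dvd_of_dvd_mul_left
    exact ⟨2 * m ^ 2, by rw [hmain]; ring⟩
  obtain ⟨t, ht⟩ := hdvdσ
  have hpk0 : 0 < p ^ k := by positivity
  have hst : σ 1 (p ^ k) * t = 2 * m ^ 2 := by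
    apply Nat.eq_of_mul_eq_mul_left hpk0
    calc p ^ k * (σ 1 (p ^ k) * t) = σ 1 (p ^ k) * (p ^ k * t) := by ring
    _ = σ 1 (p ^ k) * σ 1 (m ^ 2) := by rw [← ht]
    _ = 2 * (p ^ k * m ^ 2) := hmain
    _ = p ^ k * (2 * m ^ 2) := by ring
  have hσeven : σ 1 (p ^ k) % 2 = 0 := by
    rw [hσpk, Finset.sum_nat_mod]
    have hterm : ∀ i ∈ range (k + 1), p ^ i % 2 = 1 := fun i _ => by
      rw [Nat.pow_mod, hpodd]; simp
    rw [Finset.sum_congr rfl hterm]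
    simp
    omega
  have hm2odd : m ^ 2 % 2 = 1 := by
    have : Odd (m ^ 2) := (Nat.odd_mul.mp hodd).2
    exact Nat.odd_iff.mp this
  have ht_odd : t % 2 = 1 := by
    by_contra h
    have h2t : t % 2 = 0 := by omega
    obtain ⟨u, hu⟩ : 2 ∣ σ 1 (p ^ k) := Nat.dvd_of_mod_eq_zero hσeven
    obtain ⟨v, hv⟩ : 2 ∣ t := Nat.dvd_of_mod_eq_zero h2t
    rw [hu, hv] at hst
    have h4 : 2 * m ^ 2 = 4 * (u * v) := by rw [← hst]; ring
    omega
  have ht1 : t ≠ 1 := by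
    rintro rfl
    rw [mul_one] at hst
    exact key_not_one p k m hp hp5 hk1 hmodd hcop (by rw [ht, mul_one]) hst
  have ht3 : 3 ≤ t := by omega
  have hσge : p ^ k + 1 ≤ σ 1 (p ^ k) := by
    rw [hσpk, Finset.sum_range_succ]
    have := Finset.single_le_sum (f := fun i => p ^ i) (fun i _ => Nat.zero_le _)
      (Finset.mem_range.mpr (show 0 < k by omega))
    simp only [pow_zero] at this
    omega
  have hfin : 3 * p ^ k < 2 * m ^ 2 := by
    have h1 : (p ^ k + 1) * 3 ≤ σ 1 (p ^ k) * t := Nat.mul_le_mul hσge ht3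
    omega
  have hq : (3 : ℚ) * ((p ^ k : ℕ) : ℚ) < 2 * ((m ^ 2 : ℕ) : ℚ) := by exact_mod_cast hfin
  push_cast at hq ⊢
  linarith
end

section
/- Let N = p^k · m^2 be an odd perfect number, where p is a prime with p ≡ k ≡ 1 (mod 4) and gcd(p, m) = 1. Then m^2 - p^k ≠ 4. -/
theorem stmt_14 (p k m : ℕ) (hp : p.Prime) (hp4 : p % 4 = 1) (hk4 : k % 4 = 1)
    (hcop : Nat.Coprime p m) (hodd : Odd (p ^ k * m ^ 2))
    (hperf : Nat.Perfect (p ^ k * m ^ 2)) :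
    (m : ℤ) ^ 2 - (p : ℤ) ^ k ≠ 4 := by
  intro h
  have hp5 : 5 ≤ p := by have := hp.two_le; omega
  have hk1 : 1 ≤ k := by omega
  have hpk5 : 5 ≤ p ^ k :=
    le_trans hp5 (Nat.le_self_pow (by omega) p)
  have hm2 : m ^ 2 = p ^ k + 4 := by
    have h' : (m : ℤ) ^ 2 = (p : ℤ) ^ k + 4 := by linarith
    exact_mod_cast h'
  have hm3 : 3 ≤ m := by nlinarith
  have key : (m - 2) * (m + 2) = p ^ k := by
    zify [show 2 ≤ m by omega]
    have h' : (m : ℤ) ^ 2 = (p : ℤ) ^ k + 4 := by exact_mod_cast hm2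
    ring_nf
    ring_nf at h'
    linarith
  have hdvd1 : (m - 2) ∣ p ^ k := ⟨m + 2, key.symm⟩
  have hdvd2 : (m + 2) ∣ p ^ k := ⟨m - 2, by rw [← key, Nat.mul_comm]⟩
  obtain ⟨i, hik, hi⟩ := (Nat.dvd_prime_pow hp).mp hdvd1
  obtain ⟨j, hjk, hj⟩ := (Nat.dvd_prime_pow hp).mp hdvd2
  have hj1 : 1 ≤ j := by
    rcases Nat.eq_zero_or_pos j with h0 | h0
    · exfalso; rw [h0, pow_zero] at hj; omega
    · exact h0
  rcases Nat.eq_zero_or_pos i with hi0 | hi0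
  · -- m - 2 = 1, so m = 3, p^k = 5
    rw [hi0, pow_zero] at hi
    have hm : m = 3 := by omega
    have hpk : p ^ k = 5 := by
      rw [hm] at hm2; norm_num at hm2; omega
    have hpdvd : p ∣ 5 := by
      rw [← hpk]; exact dvd_pow_self p (by omega)
    have hpeq : p = 5 := (Nat.prime_dvd_prime_iff_eq hp (by norm_num)).mp hpdvd
    have hkeq : k = 1 := by
      subst hpeq
      rcases Nat.lt_or_ge k 2 with h2 | h2
      · omega
      · exfalso
        have : 5 ^ 2 ≤ 5 ^ k := Nat.pow_le_pow_right (by norm_num) h2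
        omega
    subst hpeq; subst hkeq; subst hm
    have h45 : (5 : ℕ) ^ 1 * 3 ^ 2 = 45 := by norm_num
    rw [h45] at hperf
    have hnot : ¬ Nat.Perfect 45 := by
      rw [Nat.perfect_iff_sum_divisors_eq_two_mul (by norm_num)]
      decide
    exact hnot hperf
  · -- p divides both m - 2 and m + 2, so p ∣ 4
    have hd1 : p ∣ m - 2 := by rw [hi]; exact dvd_pow_self p (by omega)
    have hd2 : p ∣ m + 2 := by rw [hj]; exact dvd_pow_self p (by omega)
    have hd4 : p ∣ 4 := by
      have := Nat.dvd_sub hd2 hd1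
      rwa [show m + 2 - (m - 2) = 4 by omega] at this
    have := Nat.le_of_dvd (by norm_num) hd4
    omega
end

section
/- Let N = p^k · m^2 be an odd perfect number, where p is a prime with p ≡ k ≡ 1 (mod 4) and gcd(p, m) = 1. Then m^2 - p^k ≥ 8. -/
open Finset

private def sig (n : ℕ) : ℕ := ∑ d ∈ n.divisors, d

private lemma sig_ge_self {n : ℕ} (hn : n ≠ 0) : n ≤ sig n :=
  Finset.single_le_sum (fun i _ => Nat.zero_le i) (Nat.mem_divisors_self n hn)

private lemma sig_ge_succ {n : ℕ} (hn : 1 < n) : n + 1 ≤ sig n := by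
  have h1 : ({1, n} : Finset ℕ) ⊆ n.divisors := by
    intro d hd
    rcases Finset.mem_insert.mp hd with h | h
    · exact h ▸ Nat.one_mem_divisors.mpr (by omega)
    · exact (Finset.mem_singleton.mp h) ▸ Nat.mem_divisors_self n (by omega)
  calc n + 1 = ∑ d ∈ ({1, n} : Finset ℕ), d := by
        rw [Finset.sum_pair (by omega : (1 : ℕ) ≠ n)]; omega
    _ ≤ _ := Finset.sum_le_sum_of_subset h1

private lemma sig_mul {x y : ℕ} (h : Nat.Coprime x y) : sig (x * y) = sig x * sig y :=
  Nat.Coprime.sum_divisors_mul h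

private lemma sig_prime_pow {p j : ℕ} (hp : p.Prime) :
    sig (p ^ j) = ∑ i ∈ range (j + 1), p ^ i :=
  Nat.sum_divisors_prime_pow hp

private lemma geom_id {p : ℕ} (hp : 1 ≤ p) (u : ℕ) :
    (∑ i ∈ range u, p ^ i) * (p - 1) + 1 = p ^ u := by
  induction u with
  | zero => simp
  | succ u ih =>
    rw [Finset.sum_range_succ, add_mul]
    have h2 : p ^ u * (p - 1) = p ^ (u + 1) - p ^ u := by
      rw [Nat.mul_sub, mul_one, pow_succ]
    have h3 : p ^ u ≤ p ^ (u + 1) := Nat.pow_le_pow_right hp (by omega)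
    omega

set_option maxHeartbeats 1000000 in
theorem stmt_15 (p k m : ℕ) (hp : p.Prime) (hp4 : p % 4 = 1) (hk4 : k % 4 = 1)
    (hcop : Nat.Coprime p m) (hodd : Odd (p ^ k * m ^ 2))
    (hperf : Nat.Perfect (p ^ k * m ^ 2)) :
    (m : ℤ) ^ 2 - (p : ℤ) ^ k ≥ 8 := by
  -- basic facts
  have hp2 := hp.two_le
  have hp5 : 5 ≤ p := by
    rcases Nat.lt_or_ge p 5 with h | h
    · interval_cases p <;> simp_all
    · exact h
  have hk1 : 1 ≤ k := by omega
  have hm0 : m ≠ 0 := by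
    intro h
    rw [h] at hperf
    simpa using hperf.2
  have hmodd : Odd m := by
    have h2 := (Nat.odd_mul.mp hodd).2
    have h3 : Odd (m * m) := by rwa [← sq]
    exact (Nat.odd_mul.mp h3).1
  have hpodd : p % 2 = 1 := by omega
  -- sigma is multiplicative; perfect
  have hpos : 0 < p ^ k * m ^ 2 := by positivity
  have hσN : sig (p ^ k * m ^ 2) = 2 * (p ^ k * m ^ 2) :=
    (Nat.perfect_iff_sum_divisors_eq_two_mul hpos).mp hperf
  have hcpk : Nat.Coprime (p ^ k) (m ^ 2) := Nat.Coprime.pow k 2 hcop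
  have hσ : sig (p ^ k) * sig (m ^ 2) = 2 * (p ^ k * m ^ 2) := by
    rw [← sig_mul hcpk]; exact hσN
  -- p^k coprime to sig (p^k)
  have hsigpk : sig (p ^ k) = ∑ i ∈ range (k + 1), p ^ i := sig_prime_pow hp
  have hcps : Nat.Coprime p (sig (p ^ k)) := by
    have h1 : sig (p ^ k) = (∑ i ∈ range k, p ^ (i + 1)) + 1 := by
      rw [hsigpk, Finset.sum_range_succ' (fun i => p ^ i)]
      simp
    have h2 : p ∣ ∑ i ∈ range k, p ^ (i + 1) :=
      Finset.dvd_sum fun i _ => dvd_pow_self p i.succ_ne_zero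
    obtain ⟨w, hw⟩ := h2
    rw [h1, hw, add_comm]
    exact (Nat.coprime_add_mul_left_right p 1 w).mpr (Nat.coprime_one_right p)
  -- p^k ∣ sig (m^2)
  have hdvdσ : p ^ k ∣ sig (m ^ 2) := by
    have h1 : p ^ k ∣ sig (m ^ 2) * sig (p ^ k) := by
      refine ⟨2 * m ^ 2, ?_⟩
      rw [mul_comm (sig (m ^ 2)) _, hσ]; ring
    exact (Nat.Coprime.pow_left k hcps).dvd_of_dvd_mul_right h1
  obtain ⟨t, ht⟩ := hdvdσ
  have hppos : 0 < p ^ k := Nat.pow_pos (by omega)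
  have hst : sig (p ^ k) * t = 2 * m ^ 2 := by
    have h2 : p ^ k * (sig (p ^ k) * t) = p ^ k * (2 * m ^ 2) := by
      rw [ht] at hσ
      calc p ^ k * (sig (p ^ k) * t) = sig (p ^ k) * (p ^ k * t) := by ring
        _ = 2 * (p ^ k * m ^ 2) := hσ
        _ = p ^ k * (2 * m ^ 2) := by ring
    exact Nat.eq_of_mul_eq_mul_left hppos h2
  -- the factorization sig(p^k) = A * B with B = p^u + 1, k = 2u - 1
  obtain ⟨u, hu⟩ : ∃ u, k + 1 = 2 * u := ⟨(k + 1) / 2, by omega⟩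
  have huodd : u % 2 = 1 := by omega
  have hu1 : 1 ≤ u := by omega
  set A : ℕ := ∑ i ∈ range u, p ^ i with hA
  set B : ℕ := p ^ u + 1 with hB
  have hAB : sig (p ^ k) = A * B := by
    rw [hsigpk, hu, two_mul, Finset.sum_range_add]
    have : ∀ x ∈ range u, p ^ (u + x) = p ^ u * p ^ x := fun x _ => pow_add p u x
    rw [Finset.sum_congr rfl this, ← Finset.mul_sum]
    rw [hA, hB]; ring
  -- A is odd
  have hAodd : A % 2 = 1 := by
    have h1 : A % 2 = (∑ i ∈ range u, p ^ i % 2) % 2 := Finset.sum_nat_mod _ _ _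
    have h2 : ∀ i ∈ range u, p ^ i % 2 = 1 := fun i _ => by
      rw [Nat.pow_mod, hpodd, one_pow]
      norm_num
    rw [Finset.sum_congr rfl h2, Finset.sum_const, card_range, smul_eq_mul, mul_one] at h1
    omega
  -- the geometric identity
  have hgeo : A * (p - 1) + 1 = p ^ u := geom_id (by omega) u
  -- gcd A B = 1
  have hcoAB : Nat.Coprime A B := by
    have hd2 : Nat.gcd A B ∣ 2 := by
      have h1 : Nat.gcd A B ∣ A * (p - 1) := (Nat.gcd_dvd_left A B).mul_right _
      have h2 : Nat.gcd A B ∣ B := Nat.gcd_dvd_right A B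
      have h3 : B = A * (p - 1) + 2 := by
        rw [hB]; omega
      have h4 : Nat.gcd A B ∣ A * (p - 1) + 2 := h3 ▸ h2
      exact (Nat.dvd_add_right h1).mp h4
    have hd2' : Nat.gcd A B = 1 ∨ Nat.gcd A B = 2 := (Nat.dvd_prime Nat.prime_two).mp hd2
    rcases hd2' with h | h
    · exact h
    · exfalso
      have : (2 : ℕ) ∣ A := h ▸ Nat.gcd_dvd_left A B
      omega
  -- B = 2c
  have hpuodd : p ^ u % 2 = 1 := by rw [Nat.pow_mod, hpodd, one_pow]; omega
  obtain ⟨c, hc⟩ : ∃ c, B = 2 * c := ⟨(p ^ u + 1) / 2, by omega⟩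
  have hcoAc : Nat.Coprime A c := Nat.Coprime.coprime_dvd_right ⟨2, by omega⟩ hcoAB
  -- m^2 = A * c * t
  have hmact : m ^ 2 = A * c * t := by
    have h1 : 2 * m ^ 2 = 2 * (A * c * t) := by
      rw [← hst, hAB, hc]; ring
    omega
  -- t is odd
  have hm2odd : m ^ 2 % 2 = 1 := Nat.odd_iff.mp (Nat.odd_mul.mp hodd).2
  have htodd : t % 2 = 1 := by
    obtain ⟨w, hw⟩ : t ∣ m ^ 2 := ⟨A * c, by rw [hmact]; ring⟩
    rcases Nat.even_or_odd t with he | ho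
    · exfalso
      have hev : Even (m ^ 2) := by rw [hw]; exact he.mul_right w
      have := Nat.even_iff.mp hev
      omega
    · exact Nat.odd_iff.mp ho
  -- t ≠ 1 : the key step
  have ht1 : t ≠ 1 := by
    intro h1
    subst h1
    rw [mul_one] at ht hmact
    -- m^2 = A * c, sig(m^2) = p ^ k
    obtain ⟨a, ha⟩ : ∃ a, A = a ^ 2 := by
      refine exists_eq_pow_of_mul_eq_pow (a := A) (b := c) (c := m) ?_ hmact.symm
      rw [Nat.isUnit_iff]
      exact hcoAc
    obtain ⟨b, hb⟩ : ∃ b, c = b ^ 2 := by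
      refine exists_eq_pow_of_mul_eq_pow (a := c) (b := A) (c := m) ?_ ?_
      · rw [Nat.isUnit_iff]
        exact Nat.Coprime.gcd_eq_one (Nat.Coprime.symm hcoAc)
      · rw [mul_comm]; exact hmact.symm
    have hmab : m = a * b := by
      have : m ^ 2 = (a * b) ^ 2 := by rw [hmact, ha, hb]; ring
      exact Nat.pow_left_injective (by norm_num) this
    have hcoab : Nat.Coprime (a ^ 2) (b ^ 2) := by rw [← ha, ← hb]; exact hcoAc
    have hsigm : sig (a ^ 2) * sig (b ^ 2) = p ^ k := by
      rw [← sig_mul hcoab]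
      have : a ^ 2 * b ^ 2 = m ^ 2 := by rw [hmab]; ring
      rw [this, ht]
    -- sig (b^2) = p ^ β
    have hsbdvd : sig (b ^ 2) ∣ p ^ k := ⟨sig (a ^ 2), by rw [mul_comm]; exact hsigm.symm⟩
    obtain ⟨β, hβk, hsb⟩ := (Nat.dvd_prime_pow hp).mp hsbdvd
    -- b ≥ 2
    have hpu5 : 5 ≤ p ^ u := by
      calc 5 = 5 ^ 1 := by norm_num
        _ ≤ p ^ 1 := by exact Nat.pow_le_pow_left hp5 1
        _ ≤ p ^ u := Nat.pow_le_pow_right (by omega) hu1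
    have hc3 : 3 ≤ c := by omega
    have hb2 : 2 ≤ b := by
      by_contra h
      push_neg at h
      have : b ^ 2 ≤ 1 ^ 2 := Nat.pow_le_pow_left (by omega) 2
      simp only [one_pow] at this
      omega
    -- β ≥ u
    have hsigb_ge : c + 1 ≤ sig (b ^ 2) := by
      have h1 : 1 < b ^ 2 := Nat.one_lt_pow (by norm_num) hb2
      have := sig_ge_succ h1
      omega
    have hβu : u ≤ β := by
      by_contra hlt
      push_neg at hlt
      have h1 : p ^ (β + 1) ≤ p ^ u := Nat.pow_le_pow_right (by omega) (by omega)
      have h2 : p ^ (β + 1) = p * p ^ β := by rw [pow_succ, mul_comm]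
      have h3 : 2 * p ^ β ≥ p ^ u + 3 := by
        rw [← hsb]; omega
      have h4 : 5 * p ^ β ≤ p * p ^ β := Nat.mul_le_mul_right (p ^ β) hp5
      omega
    rcases Nat.lt_or_ge u 2 with hu2 | hu2
    · -- u = 1, k = 1 : m = b essentially
      have hueq : u = 1 := by omega
      have hkeq : k = 1 := by omega
      have hA1 : A = 1 := by rw [hA, hueq]; simp
      have hm2c : m ^ 2 = c := by rw [hmact, hA1, one_mul]
      have hsigm2 : sig (m ^ 2) = p := by rw [ht, hkeq, pow_one]
      -- r := minFac m
      have hm2 : 2 ≤ m := by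
        by_contra h
        push_neg at h
        have : m ^ 2 ≤ 1 ^ 2 := Nat.pow_le_pow_left (by omega) 2
        simp only [one_pow] at this
        omega
      set r : ℕ := m.minFac with hr
      have hrp : r.Prime := Nat.minFac_prime (by omega)
      have hrdvd : r ∣ m := Nat.minFac_dvd m
      set e : ℕ := m.factorization r with he
      have he1 : 1 ≤ e := hrp.factorization_pos_of_dvd hm0 hrdvd
      have hmsplit : r ^ e * (m / r ^ e) = m := Nat.ordProj_mul_ordCompl_eq_self m r
      set m' : ℕ := m / r ^ e with hm'
      have hcoprm' : Nat.Coprime r m' := Nat.coprime_ordCompl hrp hm0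
      have hm2split : m ^ 2 = r ^ (2 * e) * m' ^ 2 := by
        rw [← hmsplit, mul_pow, ← pow_mul, mul_comm e 2]
      have hcop2 : Nat.Coprime (r ^ (2 * e)) (m' ^ 2) := Nat.Coprime.pow (2 * e) 2 hcoprm'
      have hsigsplit : sig (r ^ (2 * e)) * sig (m' ^ 2) = p := by
        rw [← sig_mul hcop2, ← hm2split, hsigm2]
      have hsrdvd : sig (r ^ (2 * e)) ∣ p := ⟨sig (m' ^ 2), hsigsplit.symm⟩
      have hsr1 : sig (r ^ (2 * e)) ≠ 1 := by
        have h1 : 1 < r ^ (2 * e) := Nat.one_lt_pow (by omega) hrp.two_le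
        have := sig_ge_self (show r ^ (2 * e) ≠ 0 by omega)
        omega
      have hsrp : sig (r ^ (2 * e)) = p := by
        rcases (Nat.dvd_prime hp).mp hsrdvd with h | h
        · exact absurd h hsr1
        · exact h
      -- r ∣ p - 1
      have hrp1 : r ∣ p - 1 := by
        have h1 : sig (r ^ (2 * e)) = (∑ i ∈ range (2 * e), r ^ (i + 1)) + 1 := by
          rw [sig_prime_pow hrp, Finset.sum_range_succ' (fun i => r ^ i)]
          simp
        have h2 : r ∣ ∑ i ∈ range (2 * e), r ^ (i + 1) :=
          Finset.dvd_sum fun i _ => dvd_pow_self r (Nat.succ_ne_zero i)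
        have h3 : p - 1 = ∑ i ∈ range (2 * e), r ^ (i + 1) := by omega
        rw [h3]; exact h2
      -- r ∣ p + 1
      have hrp2 : r ∣ p + 1 := by
        have h1 : r ∣ m ^ 2 := hrdvd.trans ⟨m, sq m⟩
        have h2 : p + 1 = 2 * m ^ 2 := by
          have : B = p + 1 := by rw [hB, hueq, pow_one]
          omega
        rw [h2]
        exact h1.mul_left 2
      have hr2 : r ∣ 2 := by
        have := Nat.dvd_sub hrp2 hrp1
        have h2 : p + 1 - (p - 1) = 2 := by omega
        rwa [h2] at this
      have : r = 2 := by
        rcases (Nat.dvd_prime Nat.prime_two).mp hr2 with h | h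
        · exact absurd h hrp.one_lt.ne'
        · exact h
      -- contradiction : r = 2 divides odd m
      obtain ⟨w, hw⟩ := hrdvd
      rw [this] at hw
      have := Nat.odd_iff.mp hmodd
      omega
    · -- u ≥ 2 : size contradiction
      have hsadvd : sig (a ^ 2) ∣ p ^ k := ⟨sig (b ^ 2), hsigm.symm⟩
      obtain ⟨α, hαk, hsa⟩ := (Nat.dvd_prime_pow hp).mp hsadvd
      have hαβ : α + β = k := by
        have h1 : p ^ (α + β) = p ^ k := by rw [pow_add, ← hsa, ← hsb, hsigm]
        exact Nat.pow_right_injective hp2 h1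
      have hαle : α ≤ u - 1 := by omega
      have hsale : sig (a ^ 2) ≤ p ^ (u - 1) := by
        rw [hsa]; exact Nat.pow_le_pow_right (by omega) hαle
      have hAge : p ^ (u - 1) + 1 ≤ A := by
        have h1 : A = (∑ i ∈ range (u - 1), p ^ i) + p ^ (u - 1) := by
          have h0 : u = (u - 1) + 1 := by omega
          calc A = ∑ i ∈ range ((u - 1) + 1), p ^ i := by rw [hA, ← h0]
            _ = _ := Finset.sum_range_succ _ _
        have h2 : 1 ≤ ∑ i ∈ range (u - 1), p ^ i := by
          calc 1 = p ^ 0 := by norm_num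
            _ ≤ ∑ i ∈ range (u - 1), p ^ i :=
              Finset.single_le_sum (fun i _ => Nat.zero_le _)
                (Finset.mem_range.mpr (by omega))
        omega
      have ha20 : a ^ 2 ≠ 0 := by
        intro h
        rw [ha, h] at hAge
        have : 1 ≤ p ^ (u - 1) := Nat.one_le_pow _ _ (by omega)
        omega
      have hsage : A ≤ sig (a ^ 2) := by
        have := sig_ge_self ha20
        omega
      omega
  -- now t ≥ 3
  have ht0 : t ≠ 0 := by
    intro h
    rw [h, mul_zero] at hst
    have : m ^ 2 = 0 := by omega
    exact hm0 (by simpa using pow_eq_zero_iff (n := 2) (by norm_num) |>.mp this)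
  have ht3 : 3 ≤ t := by omega
  -- sig (p^k) ≥ p^k + 1
  have hpk1 : 1 < p ^ k := Nat.one_lt_pow (by omega) (by omega)
  have hsig_ge : p ^ k + 1 ≤ sig (p ^ k) := sig_ge_succ hpk1
  have hmain : 2 * m ^ 2 ≥ 3 * (p ^ k + 1) := by
    calc 2 * m ^ 2 = sig (p ^ k) * t := hst.symm
      _ ≥ (p ^ k + 1) * 3 := Nat.mul_le_mul hsig_ge ht3
      _ = 3 * (p ^ k + 1) := by ring
  -- conclude
  have hfinal : m ^ 2 ≥ p ^ k + 8 := by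
    rcases Nat.lt_or_ge (p ^ k) 13 with hsmall | hbig
    · -- p^k < 13 : p = 5, k = 1
      have hk1' : k = 1 := by
        by_contra h
        have hk2 : 2 ≤ k := by omega
        have : 25 ≤ p ^ k := by
          calc 25 = 5 ^ 2 := by norm_num
            _ ≤ p ^ 2 := Nat.pow_le_pow_left hp5 2
            _ ≤ p ^ k := Nat.pow_le_pow_right (by omega) hk2
        omega
      have hpeq : p = 5 := by
        rw [hk1', pow_one] at hsmall
        have h9 : p = 5 ∨ p = 9 := by omega
        rcases h9 with h | h
        · exact h
        · exfalso; rw [h] at hp; norm_num at hp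
      subst hpeq; subst hk1'
      -- m ≥ 3, m ≠ 3
      have hm3 : 3 ≤ m := by
        by_contra h
        push_neg at h
        have : m ^ 2 ≤ 2 ^ 2 := Nat.pow_le_pow_left (by omega) 2
        norm_num at hmain this
        omega
      have hmne3 : m ≠ 3 := by
        intro h
        subst h
        norm_num at hperf
        have h45 := (Nat.perfect_iff_sum_divisors_eq_two_mul (by norm_num)).mp hperf
        exact absurd h45 (by decide)
      have hm4 : 4 ≤ m := by omega
      have h16 : 4 ^ 2 ≤ m ^ 2 := Nat.pow_le_pow_left hm4 2
      norm_num at h16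
      omega
    · omega
  have hcast : (p : ℤ) ^ k + 8 ≤ (m : ℤ) ^ 2 := by
    have := (Nat.cast_le (α := ℤ)).mpr hfinal
    push_cast at this
    linarith
  linarith
end

section
/- Let N be an odd perfect number with r = ω(N) distinct prime factors. Then N^(2 - r) ≤ (1/3) · (2/3)^(r - 1), where the left-hand side is interpreted as a real power with integer exponent 2 - r. -/
open Finset

-- (p-1) * (1 + p + ... + p^a) < p * p^a
lemma aux_geom (p a : ℕ) (hp : 1 ≤ p) :
    (p - 1) * (∑ k ∈ Finset.range (a + 1), p ^ k) < p * p ^ a := by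
  obtain ⟨q, rfl⟩ : ∃ q, p = q + 1 := ⟨p - 1, by omega⟩
  simp only [Nat.add_sub_cancel]
  induction a with
  | zero => simp
  | succ a ih =>
      rw [Finset.sum_range_succ, Nat.mul_add]
      have e1 : (q + 1) * (q + 1) ^ a = (q + 1) ^ (a + 1) := by ring
      have e2 : (q + 1) * (q + 1) ^ (a + 1) = (q + 1) ^ (a + 1) + q * (q + 1) ^ (a + 1) := by
        ring
      omega

lemma key_ineq (N : ℕ) (hN : N ≠ 0) (hperf : ∑ d ∈ N.divisors, d = 2 * N) :
    2 * ∏ p ∈ N.primeFactors, (p - 1) < ∏ p ∈ N.primeFactors, p := by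
  have hNfac : ∏ p ∈ N.primeFactors, p ^ N.factorization p = N :=
    Nat.factorization_prod_pow_eq_self hN
  have hsum := Nat.sum_divisors hN
  rw [hperf] at hsum
  have hmain : ∀ p ∈ N.primeFactors,
      (p - 1) * (∑ k ∈ Finset.range (N.factorization p + 1), p ^ k)
        < p * p ^ N.factorization p := by
    intro p hp
    exact aux_geom p _ (Nat.prime_of_mem_primeFactors hp).one_lt.le
  have hne : N.primeFactors.Nonempty := by
    rcases Finset.eq_empty_or_nonempty N.primeFactors with h | h
    · exfalso
      have : N = 1 := by
        have := Nat.primeFactors_eq_empty.mp h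
        omega
      rw [this] at hperf
      simp at hperf
    · exact h
  have hprod :
      ∏ p ∈ N.primeFactors, ((p - 1) * ∑ k ∈ Finset.range (N.factorization p + 1), p ^ k)
        < ∏ p ∈ N.primeFactors, (p * p ^ N.factorization p) := by
    apply Finset.prod_lt_prod_of_nonempty _ hmain hne
    intro p hp
    have h2 := (Nat.prime_of_mem_primeFactors hp).two_le
    have : 0 < ∑ k ∈ Finset.range (N.factorization p + 1), p ^ k :=
      Finset.sum_pos (fun k _ => Nat.pow_pos (by omega)) ⟨0, by simp⟩
    exact Nat.mul_pos (by omega) this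
  rw [Finset.prod_mul_distrib, Finset.prod_mul_distrib, ← hsum, hNfac] at hprod
  -- hprod : (∏ (p-1)) * (2*N) < (∏ p) * N
  have h2 : (2 * ∏ p ∈ N.primeFactors, (p - 1)) * N < (∏ p ∈ N.primeFactors, p) * N := by
    calc (2 * ∏ p ∈ N.primeFactors, (p - 1)) * N
        = (∏ p ∈ N.primeFactors, (p - 1)) * (2 * N) := by ring
      _ < (∏ p ∈ N.primeFactors, p) * N := hprod
  exact Nat.lt_of_mul_lt_mul_right h2

theorem stmt_17 (N : ℕ) (hodd : Odd N) (hperf : N.Perfect) :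
    (N : ℝ) ^ ((2 : ℤ) - (N.primeFactors.card : ℤ)) ≤
      (1 / 3 : ℝ) * (2 / 3 : ℝ) ^ ((N.primeFactors.card : ℤ) - 1) := by
  have hNpos : 0 < N := hperf.2
  have hN0 : N ≠ 0 := hNpos.ne'
  have hsum : ∑ d ∈ N.divisors, d = 2 * N :=
    (Nat.perfect_iff_sum_divisors_eq_two_mul hNpos).mp hperf
  have hkey := key_ineq N hN0 hsum
  have hp3 : ∀ p ∈ N.primeFactors, 3 ≤ p ∧ Odd p := by
    intro p hp
    have hpp := Nat.prime_of_mem_primeFactors hp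
    have hdvd := Nat.dvd_of_mem_primeFactors hp
    have hne2 : p ≠ 2 := by
      rintro rfl
      exact (Nat.not_odd_iff_even.mpr (even_iff_two_dvd.mpr hdvd)) hodd
    exact ⟨by have := hpp.two_le; omega, hpp.odd_of_ne_two hne2⟩
  -- at least three distinct prime factors
  have hr3 : 3 ≤ N.primeFactors.card := by
    by_contra h
    push_neg at h
    rcases (show N.primeFactors.card = 0 ∨ N.primeFactors.card = 1 ∨
        N.primeFactors.card = 2 by omega) with h0 | h1 | h2
    · rw [Finset.card_eq_zero.mp h0] at hkey
      simp at hkey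
    · obtain ⟨p, hp⟩ := Finset.card_eq_one.mp h1
      have hpmem : p ∈ N.primeFactors := hp ▸ Finset.mem_singleton_self p
      obtain ⟨hple, -⟩ := hp3 p hpmem
      rw [hp, Finset.prod_singleton, Finset.prod_singleton] at hkey
      omega
    · obtain ⟨p, q, hne, hpq⟩ := Finset.card_eq_two.mp h2
      have hpmem : p ∈ N.primeFactors := by rw [hpq]; simp
      have hqmem : q ∈ N.primeFactors := by rw [hpq]; simp
      obtain ⟨hple, hpo⟩ := hp3 p hpmem
      obtain ⟨hqle, hqo⟩ := hp3 q hqmem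
      rw [hpq, Finset.prod_pair hne, Finset.prod_pair hne] at hkey
      have h5 : 5 ≤ p ∨ 5 ≤ q := by
        obtain ⟨a, rfl⟩ := hpo
        obtain ⟨b, rfl⟩ := hqo
        omega
      rcases h5 with h5 | h5
      · obtain ⟨a, rfl⟩ : ∃ a, p = a + 5 := ⟨p - 5, by omega⟩
        obtain ⟨b, rfl⟩ : ∃ b, q = b + 3 := ⟨q - 3, by omega⟩
        have e1 : a + 5 - 1 = a + 4 := by omega
        have e2 : b + 3 - 1 = b + 2 := by omega
        rw [e1, e2] at hkey
        nlinarith [hkey]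
      · obtain ⟨a, rfl⟩ : ∃ a, p = a + 3 := ⟨p - 3, by omega⟩
        obtain ⟨b, rfl⟩ : ∃ b, q = b + 5 := ⟨q - 5, by omega⟩
        have e1 : a + 3 - 1 = a + 2 := by omega
        have e2 : b + 5 - 1 = b + 4 := by omega
        rw [e1, e2] at hkey
        nlinarith [hkey]
  -- N ≥ 3 ^ r
  have hN3 : 3 ^ N.primeFactors.card ≤ N := by
    calc 3 ^ N.primeFactors.card = ∏ _p ∈ N.primeFactors, 3 := by
          rw [Finset.prod_const]
      _ ≤ ∏ p ∈ N.primeFactors, p :=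
          Finset.prod_le_prod' fun p hp => (hp3 p hp).1
      _ ≤ N := Nat.le_of_dvd hNpos (Nat.prod_primeFactors_dvd N)
  -- real inequality
  obtain ⟨k, hk⟩ : ∃ k, N.primeFactors.card = k + 3 :=
    ⟨N.primeFactors.card - 3, by omega⟩
  rw [hk]
  have e1 : ((2 : ℤ) - ((k + 3 : ℕ) : ℤ)) = -((k + 1 : ℕ) : ℤ) := by push_cast; ring
  have e2 : (((k + 3 : ℕ) : ℤ) - 1) = ((k + 2 : ℕ) : ℤ) := by push_cast; ring
  rw [e1, e2, zpow_neg, zpow_natCast, zpow_natCast]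
  have hNk : (3 : ℝ) ^ (k + 3) ≤ (N : ℝ) ^ (k + 1) := by
    have h1 : (3 : ℝ) ^ (k + 3) ≤ (N : ℝ) := by
      exact_mod_cast Nat.cast_le.mpr (hk ▸ hN3)
    calc (3 : ℝ) ^ (k + 3) ≤ (N : ℝ) := h1
      _ ≤ (N : ℝ) ^ (k + 1) := by
          apply le_self_pow₀ _ (by omega)
          have : (3 : ℝ) ^ (k + 3) ≥ 1 := one_le_pow₀ (by norm_num : (1:ℝ) ≤ 3)
          linarith
  calc ((N : ℝ) ^ (k + 1))⁻¹ ≤ ((3 : ℝ) ^ (k + 3))⁻¹ := by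
        apply inv_anti₀ (by positivity) hNk
    _ = (1 / 3 : ℝ) * (1 / 3 : ℝ) ^ (k + 2) := by
        rw [← inv_pow]
        norm_num
        ring
    _ ≤ (1 / 3 : ℝ) * (2 / 3 : ℝ) ^ (k + 2) := by
        gcongr <;> norm_num
end

section
/- Let p and q be primes with 5 < p < q. Then for every prime r and every positive integer k, σ(pq)/(pq) ≠ σ(r^k)/r^k; in particular, the abundancy index σ(pq)/(pq) is not attained by any prime power. -/
theorem stmt_19 (p q : ℕ) (hp : p.Prime) (hq : q.Prime) (h5 : 5 < p) (hpq : p < q) :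
    ∀ (r k : ℕ), r.Prime → 0 < k →
      (ArithmeticFunction.sigma 1 (p * q) : ℚ) / ((p * q : ℕ) : ℚ) ≠ (ArithmeticFunction.sigma 1 (r ^ k) : ℚ) / ((r ^ k : ℕ) : ℚ) := by
  intro r k hr hk h
  have hne : p ≠ q := hpq.ne
  have hcop : Nat.Coprime p q := (Nat.coprime_primes hp hq).mpr hne
  have hpq0 : (p * q : ℕ) ≠ 0 := Nat.mul_ne_zero hp.pos.ne' hq.pos.ne'
  have hrk0 : (r ^ k : ℕ) ≠ 0 := pow_ne_zero _ hr.pos.ne'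
  -- cross multiply in ℕ
  have h1 : ((p * q : ℕ) : ℚ) ≠ 0 := by exact_mod_cast hpq0
  have h2 : ((r ^ k : ℕ) : ℚ) ≠ 0 := by exact_mod_cast hrk0
  rw [div_eq_div_iff h1 h2] at h
  have hN : ArithmeticFunction.sigma 1 (p * q) * r ^ k
      = ArithmeticFunction.sigma 1 (r ^ k) * (p * q) := by exact_mod_cast h
  -- coprimality of r with σ(r^k)
  have hsig : ArithmeticFunction.sigma 1 (r ^ k)
      = (∑ j ∈ Finset.range k, r ^ (j + 1)) + 1 := by
    rw [ArithmeticFunction.sigma_one_apply_prime_pow hr, Finset.sum_range_succ']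
    simp
  have hrd : r ∣ ∑ j ∈ Finset.range k, r ^ (j + 1) :=
    Finset.dvd_sum fun j _ => dvd_pow_self r (Nat.succ_ne_zero j)
  have hcop2 : Nat.Coprime r (ArithmeticFunction.sigma 1 (r ^ k)) := by
    rw [hr.coprime_iff_not_dvd]
    intro hd
    rw [hsig] at hd
    have : r ∣ 1 := (Nat.dvd_add_right hrd).mp hd
    exact hr.one_lt.ne' (Nat.dvd_one.mp this)
  have hcop3 : Nat.Coprime (r ^ k) (ArithmeticFunction.sigma 1 (r ^ k)) :=
    Nat.Coprime.pow_left _ hcop2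
  have hdvd : r ^ k ∣ p * q := by
    have : r ^ k ∣ ArithmeticFunction.sigma 1 (r ^ k) * (p * q) :=
      ⟨ArithmeticFunction.sigma 1 (p * q), by rw [← hN]; ring⟩
    exact (Nat.Coprime.dvd_of_dvd_mul_left hcop3 this)
  -- r = p or r = q
  have hrpq : r = p ∨ r = q := by
    have hr1 : r ∣ p * q := dvd_trans (dvd_pow_self r hk.ne') hdvd
    rcases (Nat.Prime.dvd_mul hr).mp hr1 with h1 | h1
    · exact Or.inl ((Nat.prime_dvd_prime_iff_eq hr hp).mp h1)
    · exact Or.inr ((Nat.prime_dvd_prime_iff_eq hr hq).mp h1)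
  -- k = 1
  have hk1 : k = 1 := by
    by_contra hk2
    have hk2' : 2 ≤ k := by omega
    have hr2 : r ^ 2 ∣ p * q := dvd_trans (pow_dvd_pow r hk2') hdvd
    rcases hrpq with rfl | rfl
    · have : r ∣ q := by
        rw [sq] at hr2
        exact (Nat.mul_dvd_mul_iff_left hr.pos).mp hr2
      exact hne ((Nat.prime_dvd_prime_iff_eq hr hq).mp this)
    · have : r ∣ p := by
        have h2 : r * r ∣ r * p := by rw [mul_comm r p]; rwa [sq] at hr2
        exact (Nat.mul_dvd_mul_iff_left hr.pos).mp h2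
      exact hne ((Nat.prime_dvd_prime_iff_eq hr hp).mp this).symm
  subst hk1
  have hsigpq : ArithmeticFunction.sigma 1 (p * q) = (p + 1) * (q + 1) := by
    rw [ArithmeticFunction.isMultiplicative_sigma.map_mul_of_coprime hcop]
    have e1 : ArithmeticFunction.sigma 1 p = p + 1 := by
      have := ArithmeticFunction.sigma_one_apply_prime_pow (i := 1) hp
      simpa [Finset.sum_range_succ, add_comm] using this
    have e2 : ArithmeticFunction.sigma 1 q = q + 1 := by
      have := ArithmeticFunction.sigma_one_apply_prime_pow (i := 1) hq
      simpa [Finset.sum_range_succ, add_comm] using this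
    rw [e1, e2]
  have hsigr : ArithmeticFunction.sigma 1 (r ^ 1) = r + 1 := by
    have := ArithmeticFunction.sigma_one_apply_prime_pow (i := 1) hr
    simpa [Finset.sum_range_succ, add_comm] using this
  rw [hsigpq, hsigr, pow_one] at hN
  rcases hrpq with rfl | rfl
  · nlinarith [hp.pos, hq.pos]
  · nlinarith [hp.pos, hq.pos]
end
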